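/- arXiv:1209.0189 — 6 statements merged into one kernel-verified Lean document; each statement's English description precedes it below -/
import Mathlib

section
/- Let (X_i) be i.i.d. uniform on {-1,1} and S_n = X_1 + ... + X_n the simple random walk. Define τ_0 = 0 and τ_{l+1} = min{ i > τ_l : S_{i-1} S_{i+1} < 0 }. Define X̄_j = Σ_{l≥0} (-1)^l X_1 X_{j+1} 1_{τ_l+1 ≤ j ≤ τ_{l+1}}. Then the process S̄_n = X̄_1 + ... + X̄_n is again a simple random walk (i.e., its increments are i.i.d. uniform on {-1,1}). -/
open MeasureTheory ProbabilityTheory Filter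

noncomputable section

/-- Increment `X_i = S_i - S_{i-1}` of a walk. -/
def inc (S : ℕ → ℤ) (i : ℕ) : ℤ := S i - S (i - 1)

/-- The times `τ_l` of the Csáki–Vincze construction. -/
def cvTau (S : ℕ → ℤ) : ℕ → ℕ
  | 0 => 0
  | l + 1 => sInf {i | cvTau S l < i ∧ S (i - 1) * S (i + 1) < 0}

/-- The index `l` such that `τ_l + 1 ≤ j ≤ τ_{l+1}`, i.e. the number of
sign-change times strictly before `j`. -/
def cvEll (S : ℕ → ℤ) (j : ℕ) : ℕ :=
  ((Finset.range j).filter fun i => 0 < i ∧ S (i - 1) * S (i + 1) < 0).card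

/-- The increments `X̄_j = (-1)^l X_1 X_{j+1}`, `τ_l + 1 ≤ j ≤ τ_{l+1}`. -/
def cvBarX (S : ℕ → ℤ) (j : ℕ) : ℤ := (-1) ^ cvEll S j * inc S 1 * inc S (j + 1)

/-- The Csáki–Vincze transform `T(S)_n = X̄_1 + ⋯ + X̄_n`. -/
def CV (S : ℕ → ℤ) (n : ℕ) : ℤ := ∑ j ∈ Finset.range n, cvBarX S (j + 1)

/-- Iterates of the Csáki–Vincze transform. -/
def CViter : ℕ → (ℕ → ℤ) → ℕ → ℤ
  | 0, S => S
  | h + 1, S => CV (CViter h S)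

/-- `S` is a simple random walk: `S_0 = 0` and the increments are
i.i.d. uniform on `{-1, 1}`. -/
def IsSRW {Ω : Type*} [MeasurableSpace Ω] (P : Measure Ω) (S : Ω → ℕ → ℤ) : Prop :=
  (∀ ω, S ω 0 = 0) ∧
  (∀ ω i, S ω (i + 1) - S ω i = 1 ∨ S ω (i + 1) - S ω i = -1) ∧
  (∀ i, Measurable fun ω => S ω i) ∧
  iIndepFun (fun i ω => S ω (i + 1) - S ω i) P ∧
  (∀ i, P {ω | S ω (i + 1) - S ω i = 1} = 1 / 2) ∧
  (∀ i, P {ω | S ω (i + 1) - S ω i = -1} = 1 / 2)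

/-! ### Auxiliary material for the proof -/

set_option linter.unusedSectionVars false

/-- The predictable sign `ε_j = (-1)^{ℓ(j)} X_1`. -/
def cvSign (S : ℕ → ℤ) (j : ℕ) : ℤ := (-1) ^ cvEll S j * inc S 1

lemma cvBarX_eq (S : ℕ → ℤ) (j : ℕ) : cvBarX S j = cvSign S j * inc S (j+1) := rfl

lemma CV_succ_sub (S : ℕ → ℤ) (n : ℕ) : CV S (n+1) - CV S n = cvBarX S (n+1) := by
  simp [CV, Finset.sum_range_succ]

lemma cvEll_congr {S S' : ℕ → ℤ} {j : ℕ} (h : ∀ m ≤ j, S m = S' m) :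
    cvEll S j = cvEll S' j := by
  unfold cvEll
  congr 1
  apply Finset.filter_congr
  intro i hi
  rw [Finset.mem_range] at hi
  rw [h (i-1) (by omega), h (i+1) (by omega)]

lemma cvSign_congr {S S' : ℕ → ℤ} {j : ℕ} (hj : 1 ≤ j) (h : ∀ m ≤ j, S m = S' m) :
    cvSign S j = cvSign S' j := by
  unfold cvSign inc
  rw [cvEll_congr h, h 1 hj, h 0 (Nat.zero_le _)]

/-- Reconstruction of the walk prefix from `X_1 = c` and prescribed transformed
increments `y`. -/
def recL (c : ℤ) (y : ℕ → ℤ) : ℕ → List ℤ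
  | 0 => [0, c]
  | n+1 => recL c y n ++
      [(recL c y n).getD (n+1) 0 + cvSign (fun k => (recL c y n).getD k 0) (n+1) * y n]

def recS (c : ℤ) (y : ℕ → ℤ) (n : ℕ) : ℤ := (recL c y n).getD n 0

lemma recL_length (c : ℤ) (y : ℕ → ℤ) (n : ℕ) : (recL c y n).length = n + 2 := by
  induction n with
  | zero => rfl
  | succ n ih => simp [recL, ih]

lemma recL_getD (c : ℤ) (y : ℕ → ℤ) : ∀ n m, m ≤ n + 1 → (recL c y n).getD m 0 = recS c y m := by
  intro n
  induction n with
  | zero =>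
    intro m hm
    interval_cases m
    · rfl
    · show _ = (recL c y 1).getD 1 0
      rw [show recL c y 1 = recL c y 0 ++ _ from rfl,
        List.getD_append _ _ _ _ (by rw [recL_length]; omega)]
  | succ n ih =>
    intro m hm
    rcases Nat.lt_or_ge m (n+2) with h | h
    · rw [show recL c y (n+1) = recL c y n ++ _ from rfl,
        List.getD_append _ _ _ _ (by rw [recL_length]; omega)]
      exact ih m (by omega)
    · have hm2 : m = n + 2 := by omega
      subst hm2
      show _ = (recL c y (n+2)).getD (n+2) 0
      rw [show recL c y (n+2) = recL c y (n+1) ++ _ from rfl,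
        List.getD_append _ _ _ _ (by rw [recL_length]; omega)]

lemma recS_zero (c : ℤ) (y : ℕ → ℤ) : recS c y 0 = 0 := rfl

lemma recS_one (c : ℤ) (y : ℕ → ℤ) : recS c y 1 = c := by
  have := recL_getD c y 0 1 le_rfl
  simpa [recL] using this.symm

lemma recS_succ (c : ℤ) (y : ℕ → ℤ) (n : ℕ) :
    recS c y (n+2) = recS c y (n+1) + cvSign (recS c y) (n+1) * y n := by
  have h1 : recS c y (n+2) = (recL c y (n+1)).getD (n+2) 0 := by
    show (recL c y (n+2)).getD (n+2) 0 = _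
    rw [show recL c y (n+2) = recL c y (n+1) ++ _ from rfl,
      List.getD_append _ _ _ _ (by rw [recL_length]; omega)]
  rw [h1, show recL c y (n+1) = recL c y n ++
      [(recL c y n).getD (n+1) 0 + cvSign (fun k => (recL c y n).getD k 0) (n+1) * y n] from rfl]
  rw [List.getD_append_right _ _ _ _ (by rw [recL_length])]
  rw [recL_length]
  simp only [Nat.sub_self]
  rw [List.getD_cons_zero]
  rw [recL_getD c y n (n+1) le_rfl,
    cvSign_congr (by omega) (fun m hm => recL_getD c y n m (by omega))]

/-- `z` is `±1`. -/
def IsPM (z : ℤ) : Prop := z = 1 ∨ z = -1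

lemma IsPM.mul {a b : ℤ} (ha : IsPM a) (hb : IsPM b) : IsPM (a * b) := by
  rcases ha with h | h <;> rcases hb with h' | h' <;> simp [IsPM, h, h']

lemma IsPM.neg_one_pow (n : ℕ) : IsPM ((-1 : ℤ) ^ n) := by
  rcases Nat.even_or_odd n with h | h
  · exact Or.inl h.neg_one_pow
  · exact Or.inr h.neg_one_pow

lemma IsPM.mul_self {a : ℤ} (ha : IsPM a) : a * a = 1 := by
  rcases ha with h | h <;> simp [h]

lemma cvSign_pm {S : ℕ → ℤ} (h : IsPM (inc S 1)) (j : ℕ) : IsPM (cvSign S j) :=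
  (IsPM.neg_one_pow _).mul h

def recInc (c : ℤ) (y : ℕ → ℤ) (i : ℕ) : ℤ := recS c y (i+1) - recS c y i

lemma recInc_def (c : ℤ) (y : ℕ → ℤ) (i : ℕ) : recInc c y i = recS c y (i+1) - recS c y i := rfl

lemma inc_recS_one (c : ℤ) (y : ℕ → ℤ) : inc (recS c y) 1 = c := by
  show recS c y 1 - recS c y 0 = c
  rw [recS_one, recS_zero, sub_zero]

lemma recInc_zero (c : ℤ) (y : ℕ → ℤ) : recInc c y 0 = c := by
  unfold recInc; rw [recS_one, recS_zero, sub_zero]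

lemma recInc_succ (c : ℤ) (y : ℕ → ℤ) (i : ℕ) :
    recInc c y (i+1) = cvSign (recS c y) (i+1) * y i := by
  unfold recInc; rw [recS_succ]; ring

lemma recInc_pm {c : ℤ} (hc : IsPM c) {y : ℕ → ℤ} (hy : ∀ j, IsPM (y j)) (i : ℕ) :
    IsPM (recInc c y i) := by
  cases i with
  | zero => rw [recInc_zero]; exact hc
  | succ i =>
    rw [recInc_succ]
    exact (cvSign_pm (by rw [inc_recS_one]; exact hc) _).mul (hy i)

/-- Main deterministic correspondence lemma. -/
lemma corr (S : ℕ → ℤ) (h0 : S 0 = 0) (hc : IsPM (S 1)) (y : ℕ → ℤ) :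
    ∀ n, (∀ j < n, cvBarX S (j+1) = y j) ↔ (∀ m ≤ n+1, S m = recS (S 1) y m) := by
  intro n
  induction n with
  | zero =>
    constructor
    · intro _ m hm
      interval_cases m
      · rw [h0, recS_zero]
      · rw [recS_one]
    · intro _ j hj; omega
  | succ n ih =>
    have key : (∀ m ≤ n+1, S m = recS (S 1) y m) →
        (cvBarX S (n+1) = y n ↔ S (n+2) = recS (S 1) y (n+2)) := by
      intro hR
      have hsign : cvSign S (n+1) = cvSign (recS (S 1) y) (n+1) :=
        cvSign_congr (by omega) hR
      have hpm : IsPM (cvSign (recS (S 1) y) (n+1)) :=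
        cvSign_pm (by rw [inc_recS_one]; exact hc) _
      have hincS : inc S (n+2) = S (n+2) - S (n+1) := rfl
      rw [cvBarX_eq, hsign, hincS, recS_succ, ← hR (n+1) le_rfl]
      set e := cvSign (recS (S 1) y) (n+1) with he
      constructor
      · intro h
        have : e * (e * (S (n+2) - S (n+1))) = e * y n := by rw [h]
        rw [← mul_assoc, hpm.mul_self, one_mul] at this
        omega
      · intro h
        have : S (n+2) - S (n+1) = e * y n := by omega
        rw [this, ← mul_assoc, hpm.mul_self, one_mul]
    constructor
    · intro h
      have hR : ∀ m ≤ n+1, S m = recS (S 1) y m := ih.mp (fun j hj => h j (by omega))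
      intro m hm
      rcases Nat.lt_or_ge m (n+2) with hm2 | hm2
      · exact hR m (by omega)
      · have : m = n + 2 := by omega
        subst this
        exact (key hR).mp (h n (by omega))
    · intro h
      have hR : ∀ m ≤ n+1, S m = recS (S 1) y m := fun m hm => h m (by omega)
      intro j hj
      rcases Nat.lt_or_ge j n with hj2 | hj2
      · exact ih.mpr hR j hj2
      · have hjn : j = n := by omega
        rw [hjn]
        exact (key hR).mpr (h (n+2) le_rfl)

lemma cvBarX_pm {S : ℕ → ℤ} (h0 : S 0 = 0) (hpm : ∀ i, IsPM (S (i+1) - S i)) (j : ℕ) :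
    IsPM (cvBarX S (j+1)) := by
  rw [cvBarX_eq]
  refine (cvSign_pm ?_ _).mul ?_
  · simpa [inc] using hpm 0
  · simpa [inc] using hpm (j+1)

lemma eq_on_of_incs {f g : ℕ → ℤ} {n : ℕ} (h0 : f 0 = g 0)
    (h : ∀ i ≤ n, f (i+1) - f i = g (i+1) - g i) : ∀ m ≤ n+1, f m = g m := by
  intro m
  induction m with
  | zero => intro _; exact h0
  | succ m ih =>
    intro hm
    have h1 := ih (by omega)
    have h2 := h m (by omega)
    omega

/-- Deterministic correspondence, increments form. -/
lemma corr' {S : ℕ → ℤ} (h0 : S 0 = 0) (hpm : ∀ i, IsPM (S (i+1) - S i))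
    (y : ℕ → ℤ) (n : ℕ) (c : ℤ) :
    (∀ i ≤ n, S (i+1) - S i = recInc c y i) ↔
      (S 1 = c ∧ ∀ j < n, cvBarX S (j+1) = y j) := by
  have hc : IsPM (S 1) := by have := hpm 0; rwa [h0, sub_zero] at this
  constructor
  · intro h
    have hS1 : S 1 = c := by
      have := h 0 (Nat.zero_le _)
      rw [recInc_zero, h0, sub_zero] at this
      simpa using this
    refine ⟨hS1, ?_⟩
    rw [corr S h0 hc y n, hS1]
    apply eq_on_of_incs (by rw [h0, recS_zero])
    intro i hi
    rw [← recInc_def]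
    exact h i hi
  · rintro ⟨hS1, h⟩
    have hR := (corr S h0 hc y n).mp h
    intro i hi
    rw [recInc_def, ← hS1, ← hR (i+1) (by omega), ← hR i (by omega)]

section Measurability

variable {Ω : Type*} [MeasurableSpace Ω] {S : Ω → ℕ → ℤ}

lemma measurable_cvEll (hM : ∀ i, Measurable fun ω => S ω i) (j : ℕ) :
    Measurable fun ω => cvEll (S ω) j := by
  unfold cvEll
  simp only [Finset.card_filter]
  apply Finset.measurable_sum
  intro i _
  by_cases h0 : 0 < i
  · have : (fun ω => if 0 < i ∧ S ω (i-1) * S ω (i+1) < 0 then 1 else 0)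
        = fun ω => if S ω (i-1) * S ω (i+1) < 0 then 1 else 0 := by
      funext ω; simp [h0]
    rw [this]
    have hs : MeasurableSet {ω | S ω (i-1) * S ω (i+1) < 0} :=
      ((hM (i-1)).mul (hM (i+1))) (MeasurableSet.of_discrete (s := {z : ℤ | z < 0}))
    exact Measurable.ite hs measurable_const measurable_const
  · have : (fun ω => if 0 < i ∧ S ω (i-1) * S ω (i+1) < 0 then 1 else 0)
        = fun _ => (0 : ℕ) := by
      funext ω; simp [h0]
    rw [this]; exact measurable_const

lemma measurable_cvBarX (hM : ∀ i, Measurable fun ω => S ω i) (j : ℕ) :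
    Measurable fun ω => cvBarX (S ω) j := by
  unfold cvBarX inc
  exact ((Measurable.of_discrete.comp (measurable_cvEll hM j)).mul
    ((hM 1).sub (hM 0))).mul ((hM (j+1)).sub (hM j))

end Measurability

section Probability

variable {Ω : Type*} [MeasurableSpace Ω] (P : Measure Ω) [IsProbabilityMeasure P]
  (S : Ω → ℕ → ℤ)

variable (h0 : ∀ ω, S ω 0 = 0) (hpm : ∀ ω i, IsPM (S ω (i+1) - S ω i))
  (hM : ∀ i, Measurable fun ω => S ω i)
  (hInd : iIndepFun (fun i ω => S ω (i + 1) - S ω i) P)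
  (hP1 : ∀ i, P {ω | S ω (i + 1) - S ω i = 1} = 1 / 2)
  (hP2 : ∀ i, P {ω | S ω (i + 1) - S ω i = -1} = 1 / 2)

include h0 hpm hM hInd hP1 hP2

lemma P_cyl {c : ℤ} (hc : IsPM c) {y : ℕ → ℤ} (hy : ∀ j, IsPM (y j)) (n : ℕ) :
    P (⋂ i ∈ Finset.range (n+1), (fun ω => S ω (i+1) - S ω i) ⁻¹' {recInc c y i})
      = 2⁻¹ ^ (n+1) := by
  rw [hInd.measure_inter_preimage_eq_mul (Finset.range (n+1))
    (sets := fun i => {recInc c y i}) (fun i _ => measurableSet_singleton _)]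
  rw [Finset.prod_congr rfl (g := fun _ => (2⁻¹ : ENNReal)) ?_, Finset.prod_const,
    Finset.card_range]
  intro i _
  rcases recInc_pm hc hy i with h | h <;> rw [h]
  · have := hP1 i
    rw [show (fun ω => S ω (i+1) - S ω i) ⁻¹' {1} = {ω | S ω (i+1) - S ω i = 1} from rfl, this]
    rw [one_div]
  · have := hP2 i
    rw [show (fun ω => S ω (i+1) - S ω i) ⁻¹' {-1} = {ω | S ω (i+1) - S ω i = -1} from rfl, this]
    rw [one_div]

lemma P_prefix {y : ℕ → ℤ} (hy : ∀ j, IsPM (y j)) (n : ℕ) :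
    P {ω | ∀ j < n, cvBarX (S ω) (j+1) = y j} = 2⁻¹ ^ n := by
  have hset : {ω | ∀ j < n, cvBarX (S ω) (j+1) = y j}
      = (⋂ i ∈ Finset.range (n+1), (fun ω => S ω (i+1) - S ω i) ⁻¹' {recInc 1 y i})
      ∪ (⋂ i ∈ Finset.range (n+1), (fun ω => S ω (i+1) - S ω i) ⁻¹' {recInc (-1) y i}) := by
    ext ω
    simp only [Set.mem_setOf_eq, Set.mem_union, Set.mem_iInter, Finset.mem_range,
      Set.mem_preimage, Set.mem_singleton_iff, Nat.lt_succ_iff]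
    have hS1 : IsPM (S ω 1) := by
      have := hpm ω 0
      rw [h0 ω, sub_zero] at this
      simpa using this
    constructor
    · intro h
      rcases hS1 with hc | hc
      · left; exact fun i hi => (corr' (h0 ω) (hpm ω) y n 1).mpr ⟨hc, h⟩ i hi
      · right; exact fun i hi => (corr' (h0 ω) (hpm ω) y n (-1)).mpr ⟨hc, h⟩ i hi
    · rintro (h | h)
      · exact ((corr' (h0 ω) (hpm ω) y n 1).mp h).2
      · exact ((corr' (h0 ω) (hpm ω) y n (-1)).mp h).2
  rw [hset]
  have hdisj : Disjoint
      (⋂ i ∈ Finset.range (n+1), (fun ω => S ω (i+1) - S ω i) ⁻¹' {recInc 1 y i})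
      (⋂ i ∈ Finset.range (n+1), (fun ω => S ω (i+1) - S ω i) ⁻¹' {recInc (-1) y i}) := by
    rw [Set.disjoint_left]
    intro ω hω hω'
    simp only [Set.mem_iInter, Finset.mem_range, Set.mem_preimage,
      Set.mem_singleton_iff] at hω hω'
    have h1 := hω 0 (by omega)
    have h2 := hω' 0 (by omega)
    rw [recInc_zero] at h1 h2
    omega
  rw [measure_union hdisj ?_, P_cyl P S h0 hpm hM hInd hP1 hP2 (Or.inr rfl) hy n,
    P_cyl P S h0 hpm hM hInd hP1 hP2 (Or.inl rfl) hy n, pow_succ, ← mul_add,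
    ENNReal.inv_two_add_inv_two, mul_one]
  exact MeasurableSet.biInter (Set.to_countable _)
    (fun i _ => ((hM (i+1)).sub (hM i)) (measurableSet_singleton _))

lemma Psub : ∀ (m n : ℕ) (J : Finset ℕ), J ⊆ Finset.range n → n = J.card + m →
    ∀ (y : ℕ → ℤ), (∀ j, IsPM (y j)) →
    P (⋂ j ∈ J, {ω | cvBarX (S ω) (j+1) = y j}) = 2⁻¹ ^ J.card := by
  intro m
  induction m with
  | zero =>
    intro n J hJ hcard y hy
    have hJeq : J = Finset.range n := Finset.eq_of_subset_of_card_le hJ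
      (by rw [Finset.card_range]; omega)
    subst hJeq
    have : (⋂ j ∈ Finset.range n, {ω | cvBarX (S ω) (j+1) = y j})
        = {ω | ∀ j < n, cvBarX (S ω) (j+1) = y j} := by
      ext ω; simp [Set.mem_iInter]
    rw [this, P_prefix P S h0 hpm hM hInd hP1 hP2 hy n, Finset.card_range]
  | succ m ih =>
    intro n J hJ hcard y hy
    have hne : (Finset.range n \ J).Nonempty := by
      rw [← Finset.card_pos, Finset.card_sdiff_of_subset hJ, Finset.card_range]
      omega
    obtain ⟨j, hj⟩ := hne
    rw [Finset.mem_sdiff, Finset.mem_range] at hj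
    obtain ⟨hjn, hjJ⟩ := hj
    set y1 := Function.update y j 1 with hy1
    set y2 := Function.update y j (-1) with hy2
    have hupd : ∀ k ∈ J, y1 k = y k ∧ y2 k = y k := by
      intro k hk
      have : k ≠ j := fun h => hjJ (h ▸ hk)
      simp [hy1, hy2, Function.update_of_ne this]
    have hset : (⋂ k ∈ J, {ω | cvBarX (S ω) (k+1) = y k})
        = (⋂ k ∈ insert j J, {ω | cvBarX (S ω) (k+1) = y1 k})
          ∪ (⋂ k ∈ insert j J, {ω | cvBarX (S ω) (k+1) = y2 k}) := by
      ext ω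
      simp only [Set.mem_union, Set.mem_iInter, Finset.mem_insert, Set.mem_setOf_eq]
      constructor
      · intro h
        rcases cvBarX_pm (h0 ω) (hpm ω) j with hv | hv
        · left
          rintro k (rfl | hk)
          · simpa [hy1] using hv
          · rw [(hupd k hk).1]; exact h k hk
        · right
          rintro k (rfl | hk)
          · simpa [hy2] using hv
          · rw [(hupd k hk).2]; exact h k hk
      · rintro (h | h) k hk
        · rw [← (hupd k hk).1]; exact h k (Or.inr hk)
        · rw [← (hupd k hk).2]; exact h k (Or.inr hk)
    have hdisj : Disjoint (⋂ k ∈ insert j J, {ω | cvBarX (S ω) (k+1) = y1 k})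
        (⋂ k ∈ insert j J, {ω | cvBarX (S ω) (k+1) = y2 k}) := by
      rw [Set.disjoint_left]
      intro ω hω hω'
      simp only [Set.mem_iInter, Finset.mem_insert, Set.mem_setOf_eq] at hω hω'
      have h1 := hω j (Or.inl rfl)
      have h2 := hω' j (Or.inl rfl)
      simp [hy1, hy2] at h1 h2
      omega
    have hmeas : MeasurableSet (⋂ k ∈ insert j J, {ω | cvBarX (S ω) (k+1) = y2 k}) := by
      apply MeasurableSet.biInter (Set.to_countable _)
      intro k _
      exact (measurable_cvBarX hM (k+1)) (measurableSet_singleton _)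
    have hpm1 : ∀ k, IsPM (y1 k) := by
      intro k
      rcases eq_or_ne k j with rfl | hne
      · simp [hy1, IsPM]
      · rw [hy1, Function.update_of_ne hne]; exact hy k
    have hpm2 : ∀ k, IsPM (y2 k) := by
      intro k
      rcases eq_or_ne k j with rfl | hne
      · simp [hy2, IsPM]
      · rw [hy2, Function.update_of_ne hne]; exact hy k
    have hsub : insert j J ⊆ Finset.range n := by
      intro k hk
      rcases Finset.mem_insert.mp hk with rfl | hk
      · exact Finset.mem_range.mpr hjn
      · exact hJ hk
    have hcard' : n = (insert j J).card + m := by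
      rw [Finset.card_insert_of_notMem hjJ]; omega
    rw [hset, measure_union hdisj hmeas,
      ih n (insert j J) hsub hcard' y1 hpm1, ih n (insert j J) hsub hcard' y2 hpm2,
      Finset.card_insert_of_notMem hjJ, pow_succ, ← mul_add,
      ENNReal.inv_two_add_inv_two, mul_one]

open Classical in
/-- The probability that a `±1`-valued variable lands in `A`. -/
def qval (A : Set ℤ) : ENNReal :=
  (if (1:ℤ) ∈ A then (2⁻¹ : ENNReal) else 0) + (if (-1:ℤ) ∈ A then (2⁻¹ : ENNReal) else 0)

lemma prodLemma : ∀ (J : Finset ℕ) (A : ℕ → Set ℤ) (K : Finset ℕ),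
    Disjoint J K → ∀ (a : ℕ → ℤ), (∀ j, IsPM (a j)) →
    P ((⋂ j ∈ J, (fun ω => cvBarX (S ω) (j+1)) ⁻¹' A j)
        ∩ ⋂ k ∈ K, {ω | cvBarX (S ω) (k+1) = a k})
      = (∏ j ∈ J, qval (A j)) * 2⁻¹ ^ K.card := by
  intro J
  classical
  induction J using Finset.induction_on with
  | empty =>
    intro A K _ a ha
    obtain ⟨n, hn⟩ := K.exists_nat_subset_range
    have hKn : K.card ≤ n := by
      have := Finset.card_le_card hn
      rwa [Finset.card_range] at this
    simp only [Finset.notMem_empty, Set.iInter_of_empty, Set.iInter_univ, Set.univ_inter,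
      Finset.prod_empty, one_mul]
    exact Psub P S h0 hpm hM hInd hP1 hP2 (n - K.card) n K hn (by omega) a ha
  | @insert j J hjJ ih =>
    intro A K hd a ha
    have hjK : j ∉ K := fun h => Finset.disjoint_left.mp hd (Finset.mem_insert_self j J) h
    have hdJK : Disjoint (J : Finset ℕ) K :=
      hd.mono_left (fun x hx => Finset.mem_insert_of_mem hx)
    set R : Set Ω := ⋂ k ∈ J, (fun ω => cvBarX (S ω) (k+1)) ⁻¹' A k with hR
    set Kp : Set Ω := ⋂ k ∈ K, {ω | cvBarX (S ω) (k+1) = a k} with hKp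
    set a1 := Function.update a j 1 with ha1def
    set a2 := Function.update a j (-1) with ha2def
    have ha1 : ∀ k, IsPM (a1 k) := by
      intro k; rcases eq_or_ne k j with rfl | hne
      · simp [ha1def, IsPM]
      · rw [ha1def, Function.update_of_ne hne]; exact ha k
    have ha2 : ∀ k, IsPM (a2 k) := by
      intro k; rcases eq_or_ne k j with rfl | hne
      · simp [ha2def, IsPM]
      · rw [ha2def, Function.update_of_ne hne]; exact ha k
    set K1 : Set Ω := ⋂ k ∈ insert j K, {ω | cvBarX (S ω) (k+1) = a1 k} with hK1
    set K2 : Set Ω := ⋂ k ∈ insert j K, {ω | cvBarX (S ω) (k+1) = a2 k} with hK2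
    have hdisedge : Disjoint ((J : Finset ℕ)) (insert j K) := by
      rw [Finset.disjoint_insert_right]
      exact ⟨hjJ, hdJK⟩
    have cardiK : (insert j K).card = K.card + 1 := Finset.card_insert_of_notMem hjK
    have hIH1 : P (R ∩ K1) = (∏ k ∈ J, qval (A k)) * 2⁻¹ ^ (K.card + 1) := by
      rw [hR, hK1, ih A (insert j K) hdisedge a1 ha1, cardiK]
    have hIH2 : P (R ∩ K2) = (∏ k ∈ J, qval (A k)) * 2⁻¹ ^ (K.card + 1) := by
      rw [hR, hK2, ih A (insert j K) hdisedge a2 ha2, cardiK]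
    have memLHS : ∀ ω, ω ∈ (⋂ k ∈ insert j J, (fun ω => cvBarX (S ω) (k+1)) ⁻¹' A k) ∩ Kp
        ↔ (cvBarX (S ω) (j+1) ∈ A j ∧ ω ∈ R ∧ ω ∈ Kp) := by
      intro ω
      simp only [hR, Set.mem_inter_iff, Set.mem_iInter, Finset.mem_insert, Set.mem_preimage]
      constructor
      · rintro ⟨h, hKk⟩
        exact ⟨h j (Or.inl rfl), fun k => fun hk => h k (Or.inr hk), hKk⟩
      · rintro ⟨h1, h2, h3⟩
        refine ⟨?_, h3⟩
        rintro k (rfl | hk)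
        · exact h1
        · exact h2 k hk
    have memK1 : ∀ ω, ω ∈ R ∩ K1 ↔ (cvBarX (S ω) (j+1) = 1 ∧ ω ∈ R ∩ Kp) := by
      intro ω
      simp only [hK1, hKp, Set.mem_inter_iff, Set.mem_iInter, Finset.mem_insert,
        Set.mem_setOf_eq]
      constructor
      · rintro ⟨hr, hk⟩
        refine ⟨by simpa [ha1def] using hk j (Or.inl rfl), hr, fun k hkK => ?_⟩
        have := hk k (Or.inr hkK)
        rwa [ha1def, Function.update_of_ne (by rintro rfl; exact hjK hkK)] at this
      · rintro ⟨h1, hr, hk⟩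
        refine ⟨hr, ?_⟩
        rintro k (rfl | hkK)
        · simpa [ha1def] using h1
        · rw [ha1def, Function.update_of_ne (by rintro rfl; exact hjK hkK)]; exact hk k hkK
    have memK2 : ∀ ω, ω ∈ R ∩ K2 ↔ (cvBarX (S ω) (j+1) = -1 ∧ ω ∈ R ∩ Kp) := by
      intro ω
      simp only [hK2, hKp, Set.mem_inter_iff, Set.mem_iInter, Finset.mem_insert,
        Set.mem_setOf_eq]
      constructor
      · rintro ⟨hr, hk⟩
        refine ⟨by simpa [ha2def] using hk j (Or.inl rfl), hr, fun k hkK => ?_⟩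
        have := hk k (Or.inr hkK)
        rwa [ha2def, Function.update_of_ne (by rintro rfl; exact hjK hkK)] at this
      · rintro ⟨h1, hr, hk⟩
        refine ⟨hr, ?_⟩
        rintro k (rfl | hkK)
        · simpa [ha2def] using h1
        · rw [ha2def, Function.update_of_ne (by rintro rfl; exact hjK hkK)]; exact hk k hkK
    have hprod : ∏ k ∈ insert j J, qval (A k) = qval (A j) * ∏ k ∈ J, qval (A k) :=
      Finset.prod_insert hjJ
    have hmeasK2 : MeasurableSet (R ∩ K2) := by
      apply MeasurableSet.inter
      · exact MeasurableSet.biInter (Set.to_countable _)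
          (fun k _ => (measurable_cvBarX hM (k+1)) MeasurableSet.of_discrete)
      · exact MeasurableSet.biInter (Set.to_countable _)
          (fun k _ => (measurable_cvBarX hM (k+1)) (measurableSet_singleton _))
    by_cases h1A : (1:ℤ) ∈ A j <;> by_cases h2A : (-1:ℤ) ∈ A j
    · have hsplit : (⋂ k ∈ insert j J, (fun ω => cvBarX (S ω) (k+1)) ⁻¹' A k) ∩ Kp
          = (R ∩ K1) ∪ (R ∩ K2) := by
        ext ω
        rw [Set.mem_union, memLHS, memK1, memK2]
        constructor
        · rintro ⟨hA, hr, hk⟩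
          rcases cvBarX_pm (h0 ω) (hpm ω) j with hv | hv
          · exact Or.inl ⟨hv, hr, hk⟩
          · exact Or.inr ⟨hv, hr, hk⟩
        · rintro (⟨hv, hr, hk⟩ | ⟨hv, hr, hk⟩)
          · exact ⟨hv ▸ h1A, hr, hk⟩
          · exact ⟨hv ▸ h2A, hr, hk⟩
      have hdisj : Disjoint (R ∩ K1) (R ∩ K2) := by
        rw [Set.disjoint_left]
        intro ω hω hω'
        have := (memK1 ω).mp hω
        have := (memK2 ω).mp hω'
        omega
      rw [hsplit, measure_union hdisj hmeasK2, hIH1, hIH2, hprod]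
      rw [qval, if_pos h1A, if_pos h2A, pow_succ]
      ring
    · have hsplit : (⋂ k ∈ insert j J, (fun ω => cvBarX (S ω) (k+1)) ⁻¹' A k) ∩ Kp
          = R ∩ K1 := by
        ext ω
        rw [memLHS, memK1]
        constructor
        · rintro ⟨hA, hr, hk⟩
          rcases cvBarX_pm (h0 ω) (hpm ω) j with hv | hv
          · exact ⟨hv, hr, hk⟩
          · exact absurd (hv ▸ hA) h2A
        · rintro ⟨hv, hr, hk⟩
          exact ⟨hv ▸ h1A, hr, hk⟩
      rw [hsplit, hIH1, hprod, qval, if_pos h1A, if_neg h2A, pow_succ]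
      ring
    · have hsplit : (⋂ k ∈ insert j J, (fun ω => cvBarX (S ω) (k+1)) ⁻¹' A k) ∩ Kp
          = R ∩ K2 := by
        ext ω
        rw [memLHS, memK2]
        constructor
        · rintro ⟨hA, hr, hk⟩
          rcases cvBarX_pm (h0 ω) (hpm ω) j with hv | hv
          · exact absurd (hv ▸ hA) h1A
          · exact ⟨hv, hr, hk⟩
        · rintro ⟨hv, hr, hk⟩
          exact ⟨hv ▸ h2A, hr, hk⟩
      rw [hsplit, hIH2, hprod, qval, if_neg h1A, if_pos h2A, pow_succ]
      ring
    · have hsplit : (⋂ k ∈ insert j J, (fun ω => cvBarX (S ω) (k+1)) ⁻¹' A k) ∩ Kp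
          = (∅ : Set Ω) := by
        ext ω
        rw [memLHS]
        simp only [Set.mem_empty_iff_false, iff_false]
        rintro ⟨hA, _, _⟩
        rcases cvBarX_pm (h0 ω) (hpm ω) j with hv | hv
        · exact h1A (hv ▸ hA)
        · exact h2A (hv ▸ hA)
      rw [hsplit, measure_empty, hprod, qval, if_neg h1A, if_neg h2A]
      simp

end Probability

/-- The Csáki–Vincze transform of a simple random walk is
again a simple random walk. -/
theorem csaki_vincze_is_srw {Ω : Type*} [MeasurableSpace Ω] (P : Measure Ω)
    [IsProbabilityMeasure P] (S : Ω → ℕ → ℤ) (hS : IsSRW P S) :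
    IsSRW P fun ω => CV (S ω) := by
  obtain ⟨h0, hpm, hM, hInd, hP1, hP2⟩ := hS
  have hpm' : ∀ ω i, IsPM (S ω (i+1) - S ω i) := hpm
  have hsingle : ∀ (j : ℕ) (A : Set ℤ),
      P ((fun ω => cvBarX (S ω) (j+1)) ⁻¹' A) = qval A := by
    intro j A
    have h := prodLemma P S h0 hpm' hM hInd hP1 hP2 {j} (fun _ => A) ∅
      (Finset.disjoint_empty_right _) (fun _ => 1) (fun _ => Or.inl rfl)
    simpa using h
  have hpoint : ∀ (i : ℕ) (v : ℤ), IsPM v →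
      P {ω | cvBarX (S ω) (i+1) = v} = 2⁻¹ := by
    intro i v hv
    have h := Psub P S h0 hpm' hM hInd hP1 hP2 i (i+1) {i}
      (by simp) (by rw [Finset.card_singleton]; omega) (fun _ => v) (fun _ => hv)
    simpa using h
  refine ⟨fun ω => by simp [CV], fun ω i => by rw [CV_succ_sub]; exact cvBarX_pm (h0 ω) (hpm' ω) i,
    ?_, ?_, ?_, ?_⟩
  · intro i
    exact Finset.measurable_sum _ (fun j _ => measurable_cvBarX hM (j+1))
  · rw [iIndepFun_iff_measure_inter_preimage_eq_mul]
    intro J sets _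
    have hfun : ∀ j : ℕ, (fun ω => (fun ω => CV (S ω)) ω (j+1) - (fun ω => CV (S ω)) ω j)
        = fun ω => cvBarX (S ω) (j+1) := fun j => funext fun ω => CV_succ_sub (S ω) j
    simp only [hfun]
    have hmain := prodLemma P S h0 hpm' hM hInd hP1 hP2 J sets ∅
      (Finset.disjoint_empty_right _) (fun _ => 1) (fun _ => Or.inl rfl)
    simp only [Finset.notMem_empty, Set.iInter_of_empty, Set.iInter_univ, Set.inter_univ,
      Finset.card_empty, pow_zero, mul_one] at hmain
    rw [hmain]
    exact Finset.prod_congr rfl fun j _ => (hsingle j (sets j)).symm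
  · intro i
    have : {ω | (fun ω => CV (S ω)) ω (i+1) - (fun ω => CV (S ω)) ω i = 1}
        = {ω | cvBarX (S ω) (i+1) = 1} := by
      ext ω; simp [CV_succ_sub]
    rw [this, hpoint i 1 (Or.inl rfl), one_div]
  · intro i
    have : {ω | (fun ω => CV (S ω)) ω (i+1) - (fun ω => CV (S ω)) ω i = -1}
        = {ω | cvBarX (S ω) (i+1) = -1} := by
      ext ω; simp [CV_succ_sub]
    rw [this, hpoint i (-1) (Or.inr rfl), one_div]

end
end

section
/- Let S be a simple random walk and S̄ = T(S) its Csáki–Vincze transform. Let Y_n = S̄_n - min_{k ≤ n} S̄_k. Then for all n ≥ 0, |Y_n - |S_n|| ≤ 2. -/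
open MeasureTheory ProbabilityTheory Filter

noncomputable section

section Aux

variable (S : ℕ → ℤ) (h0 : S 0 = 0)
  (hpm : ∀ i, S (i + 1) - S i = 1 ∨ S (i + 1) - S i = -1)

lemma ell_succ (j : ℕ) :
    cvEll S (j + 1) = cvEll S j + (if 0 < j ∧ S (j - 1) * S (j + 1) < 0 then 1 else 0) := by
  unfold cvEll
  rw [Finset.range_add_one, Finset.filter_insert]
  split
  · rw [Finset.card_insert_of_notMem (by simp)]
  · simp

lemma ell_mono {k n : ℕ} (h : k ≤ n) : cvEll S k ≤ cvEll S n :=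
  Finset.card_le_card (Finset.filter_subset_filter _ (Finset.range_subset_range.2 h))

include hpm in
lemma cross_zero {j : ℕ} (hj : 1 ≤ j) (h : S (j - 1) * S (j + 1) < 0) : S j = 0 := by
  obtain ⟨m, rfl⟩ : ∃ m, j = m + 1 := ⟨j - 1, by omega⟩
  simp only [Nat.add_sub_cancel] at h
  by_contra hne
  have hc : S (m + 1) ≥ 1 ∨ S (m + 1) ≤ -1 := by omega
  rcases hpm m with h1 | h1 <;> rcases hpm (m + 1) with h2 | h2 <;>
    rcases hc with hc | hc <;> nlinarith [h]

end Aux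

section Aux2
variable (S : ℕ → ℤ) (h0 : S 0 = 0)
  (hpm : ∀ i, S (i + 1) - S i = 1 ∨ S (i + 1) - S i = -1)

lemma sigma_key (σ a b : ℤ) (hσ : σ = 1 ∨ σ = -1) (ha : σ * a = |a|)
    (hab : b - a = 1 ∨ b - a = -1) (h : a ≠ 0) : σ * b = |b| := by
  rcases hσ with rfl | rfl <;>
    rcases abs_cases a with ⟨e1, e2⟩ | ⟨e1, e2⟩ <;>
    rcases abs_cases b with ⟨f1, f2⟩ | ⟨f1, f2⟩ <;>
    rw [f1] <;> omega

include h0 hpm in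
lemma sigma_spec : ∀ j : ℕ, 1 ≤ j →
    ((-1 : ℤ) ^ cvEll S j * S 1) * S j = |S j| ∧
    ((-1 : ℤ) ^ cvEll S j * S 1) * S (j - 1) = |S (j - 1)| := by
  intro j hj
  induction j, hj using Nat.le_induction with
  | base =>
    have h1 : S 1 = 1 ∨ S 1 = -1 := by have := hpm 0; rw [show (0:ℕ)+1 = 1 from rfl, h0] at this; omega
    have he : cvEll S 1 = 0 := by
      simp [cvEll, Finset.range_one, Finset.filter_singleton]
    rcases h1 with h1 | h1 <;> simp [he, h1, h0]
  | succ j hj ih =>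
    have hjpos : 0 < j := hj
    simp only [Nat.add_sub_cancel]
    rw [ell_succ, pow_add]
    by_cases hz : S j = 0
    · have hm : S (j - 1) = 1 ∨ S (j - 1) = -1 := by
        have := hpm (j - 1)
        have e : j - 1 + 1 = j := by omega
        rw [e] at this; omega
      have hp : S (j + 1) = 1 ∨ S (j + 1) = -1 := by have := hpm j; omega
      have ih2 := ih.2
      rcases hm with hm | hm <;> rcases hp with hp | hp <;>
        rcases neg_one_pow_eq_or ℤ (cvEll S j) with hs | hs <;>
        rw [hm] at ih2 <;> rw [hs] at ih2 ⊢ <;>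
        simp only [hjpos, hm, hp, hz, true_and] <;> norm_num at ih2 ⊢ <;>
        omega
    · have hcond : ¬(0 < j ∧ S (j - 1) * S (j + 1) < 0) := by
        rintro ⟨-, hlt⟩; exact hz (cross_zero S hpm hj hlt)
      rw [if_neg hcond, pow_zero, mul_one]
      have hS1 : S 1 = 1 ∨ S 1 = -1 := by have := hpm 0; rw [show (0:ℕ)+1 = 1 from rfl, h0] at this; omega
      have hσ : (-1 : ℤ) ^ cvEll S j * S 1 = 1 ∨ (-1 : ℤ) ^ cvEll S j * S 1 = -1 := by
        rcases neg_one_pow_eq_or ℤ (cvEll S j) with hs | hs <;>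
          rcases hS1 with hS1 | hS1 <;> rw [hs, hS1] <;> norm_num
      exact ⟨sigma_key _ _ _ hσ ih.1 (hpm j) hz, ih.1⟩

include h0 hpm in
lemma barX_eq (j : ℕ) (hj : 1 ≤ j) :
    cvBarX S j = |S (j + 1)| - |S j| -
      (if S (j - 1) * S (j + 1) < 0 then 2 else 0) := by
  have hjpos : 0 < j := hj
  have hsp := sigma_spec S h0 hpm (j + 1) (by omega)
  simp only [Nat.add_sub_cancel] at hsp
  have hB : cvBarX S j = (-1) ^ cvEll S j * S 1 * (S (j + 1) - S j) := by
    simp [cvBarX, inc, h0]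
  by_cases hc : S (j - 1) * S (j + 1) < 0
  · have hz : S j = 0 := cross_zero S hpm hj hc
    have hE : cvEll S (j + 1) = cvEll S j + 1 := by
      rw [ell_succ, if_pos ⟨hjpos, hc⟩]
    rw [hE, pow_succ] at hsp
    have h1 : |S (j + 1)| = 1 := by
      have := hpm j; rw [hz, sub_zero] at this
      rcases this with h | h <;> rw [h] <;> norm_num
    rw [if_pos hc, hB, hz, h1]
    have := hsp.1
    rw [h1] at this
    simp only [abs_of_nonneg, hz, abs_zero]
    nlinarith [this]
  · have hE : cvEll S (j + 1) = cvEll S j := by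
      rw [ell_succ, if_neg (by rintro ⟨-, h⟩; exact hc h)]
      simp
    rw [hE] at hsp
    rw [if_neg hc, hB]
    linear_combination hsp.1 - hsp.2

include h0 hpm in
lemma CV_eq (n : ℕ) :
    CV S n = |S (n + 1)| - 1 - 2 * (cvEll S (n + 1) : ℤ) := by
  induction n with
  | zero =>
    have h1 : S 1 = 1 ∨ S 1 = -1 := by
      have := hpm 0; rw [show (0:ℕ)+1 = 1 from rfl, h0] at this; omega
    have he : cvEll S 1 = 0 := by
      simp [cvEll, Finset.range_one, Finset.filter_singleton]
    rcases h1 with h1 | h1 <;> simp [CV, he, h1]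
  | succ n ih =>
    have hsum : CV S (n + 1) = CV S n + cvBarX S (n + 1) := by
      rw [CV, Finset.sum_range_succ, ← CV]
    have hb := barX_eq S h0 hpm (n + 1) (by omega)
    have hE := ell_succ S (n + 1)
    simp only [Nat.add_sub_cancel] at hb hE
    rw [hsum, ih, hb]
    by_cases hc : S n * S (n + 1 + 1) < 0
    · rw [if_pos hc]
      rw [if_pos ⟨n.succ_pos, hc⟩] at hE
      rw [hE]; push_cast; ring
    · rw [if_neg hc]
      rw [if_neg (by rintro ⟨-, h⟩; exact hc h)] at hE
      rw [hE]; push_cast; ring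

include h0 hpm in
lemma min_le (n : ℕ) :
    (Finset.range (n + 1)).inf' Finset.nonempty_range_add_one (CV S) ≤
      -2 * (cvEll S (n + 1) : ℤ) := by
  induction n with
  | zero =>
    have he : cvEll S 1 = 0 := by
      simp [cvEll, Finset.range_one, Finset.filter_singleton]
    simp [he, Finset.range_one, CV]
  | succ n ih =>
    have hE := ell_succ S (n + 1)
    simp only [Nat.add_sub_cancel] at hE
    by_cases hc : 0 < n + 1 ∧ S n * S (n + 1 + 1) < 0
    · have hz : S (n + 1) = 0 := cross_zero S hpm (by omega) (by simpa using hc.2)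
      have h1 : |S (n + 1 + 1)| = 1 := by
        have := hpm (n + 1); rw [hz, sub_zero] at this
        rcases this with h | h <;> rw [h] <;> norm_num
      have hle : CV S (n + 1) = -2 * (cvEll S (n + 1 + 1) : ℤ) := by
        rw [CV_eq S h0 hpm (n + 1), h1]; ring
      calc (Finset.range (n + 1 + 1)).inf' Finset.nonempty_range_add_one (CV S)
          ≤ CV S (n + 1) := Finset.inf'_le _ (by simp)
        _ = -2 * (cvEll S (n + 1 + 1) : ℤ) := hle
    · rw [if_neg hc] at hE
      obtain ⟨k, hk, hke⟩ :=
        Finset.exists_mem_eq_inf' (Finset.nonempty_range_add_one (n := n)) (CV S)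
      have hsub : k ∈ Finset.range (n + 1 + 1) := by
        simp only [Finset.mem_range] at hk ⊢; omega
      calc (Finset.range (n + 1 + 1)).inf' Finset.nonempty_range_add_one (CV S)
          ≤ CV S k := Finset.inf'_le _ hsub
        _ = (Finset.range (n + 1)).inf' Finset.nonempty_range_add_one (CV S) := hke.symm
        _ ≤ -2 * (cvEll S (n + 1) : ℤ) := ih
        _ = -2 * (cvEll S (n + 1 + 1) : ℤ) := by rw [hE]; push_cast; ring

include h0 hpm in
lemma min_ge (n : ℕ) :
    -1 - 2 * (cvEll S (n + 1) : ℤ) ≤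
      (Finset.range (n + 1)).inf' Finset.nonempty_range_add_one (CV S) := by
  apply Finset.le_inf'
  intro k hk
  rw [CV_eq S h0 hpm k]
  have hmono : (cvEll S (k + 1) : ℤ) ≤ (cvEll S (n + 1) : ℤ) := by
    have := ell_mono S (show k + 1 ≤ n + 1 by
      simp only [Finset.mem_range] at hk; omega)
    exact_mod_cast this
  have := abs_nonneg (S (k + 1))
  linarith

end Aux2

/-- If `Y_n = T(S)_n - min_{k ≤ n} T(S)_k`, then `|Y_n - |S_n|| ≤ 2`. -/
theorem abs_cv_reflected_sub_abs_le_two (S : ℕ → ℤ) (h0 : S 0 = 0)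
    (hpm : ∀ i, S (i + 1) - S i = 1 ∨ S (i + 1) - S i = -1) (n : ℕ) :
    abs (CV S n - (Finset.range (n + 1)).inf' Finset.nonempty_range_add_one (CV S) - abs (S n)) ≤ 2 := by
  have hCV := CV_eq S h0 hpm n
  have h1 := min_le S h0 hpm n
  have h2 := min_ge S h0 hpm n
  have h3 := hpm n
  rw [abs_le]
  rcases abs_cases (S n) with ⟨e1, e2⟩ | ⟨e1, e2⟩ <;>
    rcases abs_cases (S (n + 1)) with ⟨f1, f2⟩ | ⟨f1, f2⟩ <;>
    constructor <;> omega

end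
end

section
/- With the notation of the Csáki–Vincze transform, for every l ≥ 0 and every j with τ_l + 1 ≤ j ≤ τ_{l+1}, one has (-1)^l X_1 = X_{τ_l + 1}, i.e. the sign (-1)^l X_1 equals the common sign of S on the interval [τ_l+1, τ_{l+1}]. Consequently X̄_j = X_{τ_l+1} X_{j+1} for j in that range. -/
open MeasureTheory ProbabilityTheory Filter

noncomputable section

section Det


variable {f : ℕ → ℤ}

/-- the walk has infinitely many sign changes -/
def InfChg (f : ℕ → ℤ) : Prop := ∀ n, ∃ i, n < i ∧ f (i - 1) * f (i + 1) < 0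

lemma tau_succ_mem (hinf : InfChg f) (l : ℕ) :
    cvTau f l < cvTau f (l + 1) ∧ f (cvTau f (l + 1) - 1) * f (cvTau f (l + 1) + 1) < 0 := by
  have hne : {i | cvTau f l < i ∧ f (i - 1) * f (i + 1) < 0}.Nonempty := hinf (cvTau f l)
  have := Nat.sInf_mem hne
  exact this

lemma tau_min (l : ℕ) {i : ℕ} (h1 : cvTau f l < i) (h2 : i < cvTau f (l + 1)) :
    ¬ f (i - 1) * f (i + 1) < 0 := fun hc => Nat.notMem_of_lt_sInf h2 ⟨h1, hc⟩

lemma chg_elim (hstep : ∀ i, f (i + 1) - f i = 1 ∨ f (i + 1) - f i = -1) {i : ℕ}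
    (hi : 0 < i) (hm : f (i - 1) * f (i + 1) < 0) :
    f i = 0 ∧ f (i + 1) = -f (i - 1) ∧ (f (i - 1) = 1 ∨ f (i - 1) = -1) := by
  obtain ⟨k, rfl⟩ : ∃ k, i = k + 1 := ⟨i - 1, (Nat.succ_pred_eq_of_pos hi).symm⟩
  simp only [Nat.add_sub_cancel] at *
  have h1 := hstep k
  have h2 := hstep (k + 1)
  rw [mul_neg_iff] at hm
  constructor
  · omega
  constructor <;> omega

lemma tau_zero_val (h0 : f 0 = 0) (hstep : ∀ i, f (i + 1) - f i = 1 ∨ f (i + 1) - f i = -1)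
    (hinf : InfChg f) (l : ℕ) : f (cvTau f l) = 0 := by
  cases l with
  | zero => simpa [cvTau] using h0
  | succ l =>
    obtain ⟨hlt, hc⟩ := tau_succ_mem hinf l
    exact (chg_elim hstep (Nat.lt_of_le_of_lt (Nat.zero_le _) hlt) hc).1

lemma interval_sign (h0 : f 0 = 0) (hstep : ∀ i, f (i + 1) - f i = 1 ∨ f (i + 1) - f i = -1)
    (hinf : InfChg f) (l : ℕ) :
    ∀ i, cvTau f l ≤ i → i ≤ cvTau f (l + 1) →
      0 ≤ f (cvTau f l + 1) * f i ∧
        (i < cvTau f (l + 1) → f i = 0 → f (i + 1) = f (cvTau f l + 1)) := by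
  set a := cvTau f l with ha
  set b := cvTau f (l + 1) with hb
  obtain ⟨hab, hcb⟩ := tau_succ_mem hinf l
  have ha0 : f a = 0 := tau_zero_val h0 hstep hinf l
  have hs : f (a + 1) = 1 ∨ f (a + 1) = -1 := by have := hstep a; omega
  intro i hai
  induction i, hai using Nat.le_induction with
  | base =>
    intro _
    refine ⟨by rw [ha0, mul_zero], fun _ _ => rfl⟩
  | succ i hi IH =>
    intro h1
    have hib : i < b := h1
    obtain ⟨hge, hcl⟩ := IH hib.le
    have hstep_i := hstep i
    constructor
    · by_cases hz : f i = 0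
      · rw [hcl hib hz]; exact mul_self_nonneg _
      · rcases hs with hs1 | hs1 <;> rw [hs1] at hge ⊢ <;>
          simp only [one_mul, neg_one_mul] at hge ⊢ <;> omega
    · intro h2 hz
      have hnc : ¬ f (i + 1 - 1) * f (i + 1 + 1) < 0 :=
        tau_min l (by omega) h2
      simp only [Nat.add_sub_cancel] at hnc
      rw [not_lt] at hnc
      rw [mul_nonneg_iff] at hnc
      have hfi := hstep i
      have hfi2 := hstep (i + 1)
      rcases hs with hs1 | hs1 <;> rw [hs1] at hge ⊢ <;>
        simp only [one_mul, neg_one_mul] at hge ⊢ <;> omega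

lemma tau_gap (h0 : f 0 = 0) (hstep : ∀ i, f (i + 1) - f i = 1 ∨ f (i + 1) - f i = -1)
    (hinf : InfChg f) (l : ℕ) : cvTau f l + 2 ≤ cvTau f (l + 1) := by
  obtain ⟨hab, hcb⟩ := tau_succ_mem hinf l
  have ha0 : f (cvTau f l) = 0 := tau_zero_val h0 hstep hinf l
  have hb0 : f (cvTau f (l + 1)) = 0 :=
    (chg_elim hstep (Nat.lt_of_le_of_lt (Nat.zero_le _) hab) hcb).1
  by_contra h
  have heq : cvTau f (l + 1) = cvTau f l + 1 := by omega
  rw [heq] at hb0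
  have := hstep (cvTau f l)
  omega

lemma sign_tau (h0 : f 0 = 0) (hstep : ∀ i, f (i + 1) - f i = 1 ∨ f (i + 1) - f i = -1)
    (hinf : InfChg f) : ∀ l, inc f (cvTau f l + 1) = (-1) ^ l * inc f 1 := by
  intro l
  induction l with
  | zero => simp [cvTau]
  | succ l IH =>
    set a := cvTau f l with ha
    set b := cvTau f (l + 1) with hb
    obtain ⟨hab, hcb⟩ := tau_succ_mem hinf l
    have ha0 : f a = 0 := tau_zero_val h0 hstep hinf l
    obtain ⟨hb0, hbe, hbpm⟩ := chg_elim hstep (Nat.lt_of_le_of_lt (Nat.zero_le _) hab) hcb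
    rw [← hb] at hbpm
    have hgap := tau_gap h0 hstep hinf l
    have hs : f (a + 1) = 1 ∨ f (a + 1) = -1 := by have := hstep a; omega
    -- f (b - 1) = f (a + 1)
    have hsign := (interval_sign h0 hstep hinf l (b - 1) (by omega) (by omega)).1
    have hbm : f (b - 1) = f (a + 1) := by
      rcases hs with hs1 | hs1 <;> rw [hs1] at hsign ⊢ <;>
        simp only [one_mul, neg_one_mul] at hsign <;> omega
    have hia : inc f (a + 1) = f (a + 1) := by
      simp only [inc, Nat.add_sub_cancel, ha0, sub_zero]
    have hib : inc f (b + 1) = f (b + 1) := by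
      simp only [inc, Nat.add_sub_cancel, hb, hb0, sub_zero]
    rw [hib, hbe, hbm, ← hia, IH]
    ring

lemma ell_tau (h0 : f 0 = 0) (hstep : ∀ i, f (i + 1) - f i = 1 ∨ f (i + 1) - f i = -1)
    (hinf : InfChg f) : ∀ l, cvEll f (cvTau f l + 1) = l := by
  intro l
  induction l with
  | zero => simp [cvEll, cvTau, Finset.filter_singleton]
  | succ l IH =>
    set a := cvTau f l with ha
    set b := cvTau f (l + 1) with hb
    obtain ⟨hab, hcb⟩ := tau_succ_mem hinf l
    have hkey : ((Finset.range (b + 1)).filter fun i => 0 < i ∧ f (i - 1) * f (i + 1) < 0)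
        = insert b ((Finset.range (a + 1)).filter fun i => 0 < i ∧ f (i - 1) * f (i + 1) < 0) := by
      ext i
      simp only [Finset.mem_filter, Finset.mem_range, Finset.mem_insert]
      constructor
      · rintro ⟨hilt, hip, hic⟩
        by_cases hib : i = b
        · exact Or.inl hib
        · refine Or.inr ⟨?_, hip, hic⟩
          by_contra hia
          exact tau_min l (by omega) (by omega) hic
      · rintro (rfl | ⟨hia, hip, hic⟩)
        · exact ⟨Nat.lt_succ_self _, Nat.lt_of_le_of_lt (Nat.zero_le _) hab, hcb⟩
        · exact ⟨by omega, hip, hic⟩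
    rw [cvEll, hkey, Finset.card_insert_of_notMem, ← cvEll, IH]
    simp only [Finset.mem_filter, Finset.mem_range]
    push_neg
    intro hlt
    omega

lemma ell_between (h0 : f 0 = 0) (hstep : ∀ i, f (i + 1) - f i = 1 ∨ f (i + 1) - f i = -1)
    (hinf : InfChg f) {l j : ℕ} (h1 : cvTau f l + 1 ≤ j) (h2 : j ≤ cvTau f (l + 1)) :
    cvEll f j = l := by
  have hkey : ((Finset.range j).filter fun i => 0 < i ∧ f (i - 1) * f (i + 1) < 0)
      = ((Finset.range (cvTau f l + 1)).filter fun i => 0 < i ∧ f (i - 1) * f (i + 1) < 0) := by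
    ext i
    simp only [Finset.mem_filter, Finset.mem_range]
    constructor
    · rintro ⟨hilt, hip, hic⟩
      refine ⟨?_, hip, hic⟩
      by_contra hia
      exact tau_min l (by omega) (by omega) hic
    · rintro ⟨hia, hip, hic⟩
      exact ⟨by omega, hip, hic⟩
  rw [cvEll, hkey, ← cvEll, ell_tau h0 hstep hinf]

theorem det_main (h0 : f 0 = 0) (hstep : ∀ i, f (i + 1) - f i = 1 ∨ f (i + 1) - f i = -1)
    (hinf : InfChg f) : ∀ l j : ℕ, cvTau f l + 1 ≤ j → j ≤ cvTau f (l + 1) →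
      (-1) ^ l * inc f 1 = inc f (cvTau f l + 1) ∧
      cvBarX f j = inc f (cvTau f l + 1) * inc f (j + 1) := by
  intro l j h1 h2
  have hsign := sign_tau h0 hstep hinf l
  refine ⟨hsign.symm, ?_⟩
  rw [cvBarX, ell_between h0 hstep hinf h1 h2, hsign]


variable {f : ℕ → ℤ}

lemma walk_bound (h0 : f 0 = 0) (hstep : ∀ i, f (i + 1) - f i = 1 ∨ f (i + 1) - f i = -1) :
    ∀ k : ℕ, -(k : ℤ) ≤ f k ∧ f k ≤ (k : ℤ) := by
  intro k
  induction k with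
  | zero => simp [h0]
  | succ k IH => have := hstep k; push_cast; push_cast at IH; omega

lemma unbounded_infChg (h0 : f 0 = 0)
    (hstep : ∀ i, f (i + 1) - f i = 1 ∨ f (i + 1) - f i = -1)
    (hup : ∀ m : ℤ, ∃ n, m < f n) (hdown : ∀ m : ℤ, ∃ n, f n < m) : InfChg f := by
  intro n
  obtain ⟨n1, hn1⟩ := hdown (-(n + 1 : ℤ))
  have hbn1 := walk_bound h0 hstep n1
  have hn1n : (n : ℤ) + 1 < n1 := by omega
  obtain ⟨n2, hn2⟩ := hup (n1 : ℤ)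
  have hbn2 := walk_bound h0 hstep n2
  have hMne : (Set.Nonempty {i | n1 < i ∧ 1 ≤ f i}) := by
    refine ⟨n2, ?_, ?_⟩
    · exact_mod_cast lt_of_lt_of_le hn2 hbn2.2
    · have : (0 : ℤ) ≤ n1 := Int.natCast_nonneg n1
      omega
  set i := sInf {i | n1 < i ∧ 1 ≤ f i} with hidef
  obtain ⟨hi1, hi2⟩ := Nat.sInf_mem hMne
  rw [← hidef] at hi1 hi2
  have hii : n1 + 2 ≤ i := by
    by_contra h
    have heq : i = n1 + 1 := by omega
    have := hstep n1
    rw [heq] at hi2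
    omega
  obtain ⟨k, hk⟩ : ∃ k, i = k + 2 := ⟨i - 2, by omega⟩
  have hkm : k + 1 ∉ {i | n1 < i ∧ 1 ≤ f i} := Nat.notMem_of_lt_sInf (by omega)
  simp only [Set.mem_setOf_eq, not_and, not_le] at hkm
  have hk1 : f (k + 1) ≤ 0 := by
    have : n1 < k + 1 := by omega
    have := hkm this
    omega
  have hk10 : f (k + 1) = 0 := by
    have : f (k + 2) - f (k + 1) = 1 ∨ f (k + 2) - f (k + 1) = -1 := hstep (k + 1)
    rw [hk] at hi2
    omega
  have hkneg : f k < 0 := by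
    rcases Nat.eq_or_lt_of_le hii with hcase | hcase
    · have : k = n1 := by omega
      rw [this]; omega
    · have hkm2 : k ∉ {i | n1 < i ∧ 1 ≤ f i} := Nat.notMem_of_lt_sInf (by omega)
      simp only [Set.mem_setOf_eq, not_and, not_le] at hkm2
      have h1 : f k ≤ 0 := by
        have : n1 < k := by omega
        have := hkm2 this
        omega
      have := hstep k
      omega
  refine ⟨k + 1, by omega, ?_⟩
  simp only [Nat.add_sub_cancel]
  have hfi : 0 < f (k + 2) := by rw [hk] at hi2; omega
  exact mul_neg_of_neg_of_pos hkneg (by simpa using hfi)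


end Det

namespace CVaux
open Set ENNReal


variable {Ω : Type*} [MeasurableSpace Ω] (P : Measure Ω) [IsProbabilityMeasure P]
variable (X : ℕ → Ω → ℤ)

def pSum (n : ℕ) (x : Fin n → ℤ) (m : ℕ) : ℤ :=
  ∑ i ∈ Finset.range m, if h : i < n then x ⟨i, h⟩ else 0

lemma measurable_pSum (n m : ℕ) : Measurable fun x : Fin n → ℤ => pSum n x m := by
  apply Finset.measurable_sum
  intro i _
  by_cases h : i < n
  · simpa [h] using measurable_pi_apply (⟨i, h⟩ : Fin n)
  · simpa [h] using (measurable_const : Measurable fun _ : Fin n → ℤ => (0:ℤ))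

def TSet (n : ℕ) (j : ℤ) : Set (Fin n → ℤ) := {x | ∃ m, m ≤ n ∧ j ≤ pSum n x m}

lemma measurableSet_TSet (n : ℕ) (j : ℤ) : MeasurableSet (TSet n j) := by
  have h : TSet n j = ⋃ m, ⋃ (_ : m ≤ n), {x | j ≤ pSum n x m} := by
    ext x; simp [TSet]
  rw [h]
  exact MeasurableSet.iUnion fun m => MeasurableSet.iUnion fun _ =>
    measurableSet_le measurable_const (measurable_pSum n m)

lemma measurable_V (hXm : ∀ i, Measurable (X i)) (c n : ℕ) :
    Measurable fun ω (j : Fin n) => X (c + (j : ℕ)) ω :=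
  measurable_pi_lambda _ fun _ => hXm _

lemma joint_law (hXm : ∀ i, Measurable (X i))
    (hind : iIndepFun X P) (c n : ℕ) :
    P.map (fun ω (j : Fin n) => X (c + (j : ℕ)) ω)
      = Measure.pi fun j : Fin n => P.map (X (c + (j : ℕ))) := by
  haveI : ∀ j : Fin n, IsProbabilityMeasure (P.map (X (c + (j : ℕ)))) :=
    fun _ => Measure.isProbabilityMeasure_map (hXm _).aemeasurable
  refine (Measure.pi_eq fun s hs => ?_).symm
  rw [Measure.map_apply (measurable_V X hXm c n) (MeasurableSet.univ_pi hs)]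
  classical
  set sets : ℕ → Set ℤ := fun m => if h : c ≤ m ∧ m - c < n then s ⟨m - c, h.2⟩ else univ
    with hsets
  have hpre : (fun ω (j : Fin n) => X (c + (j:ℕ)) ω) ⁻¹' (Set.pi univ s)
      = ⋂ i ∈ Finset.Ico c (c + n), X i ⁻¹' sets i := by
    ext ω
    simp only [mem_preimage, Set.mem_pi, mem_univ, forall_true_left, Set.mem_iInter,
      Finset.mem_Ico]
    constructor
    · rintro h i hi
      have hc : c ≤ i ∧ i - c < n := ⟨hi.1, by omega⟩
      simp only [hsets, mem_preimage, dif_pos hc]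
      have h2 := h ⟨i - c, hc.2⟩
      have he : c + ((⟨i - c, hc.2⟩ : Fin n) : ℕ) = i := by simp; omega
      rwa [he] at h2
    · intro h j
      have h2 := h (c + (j : ℕ)) ⟨Nat.le_add_right _ _, by omega⟩
      have hc : c ≤ c + (j:ℕ) ∧ c + (j:ℕ) - c < n := ⟨Nat.le_add_right _ _, by omega⟩
      simp only [hsets, mem_preimage, dif_pos hc] at h2
      have he : (⟨c + (j:ℕ) - c, hc.2⟩ : Fin n) = j := by
        ext
        simp
      rwa [he] at h2
  rw [hpre, hind.measure_inter_preimage_eq_mul (Finset.Ico c (c + n))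
    (fun i _ => by simp only [hsets]; split_ifs; exacts [hs _, MeasurableSet.univ])]
  rw [Finset.prod_Ico_eq_prod_range]
  simp only [Nat.add_sub_cancel_left]
  rw [← Fin.prod_univ_eq_prod_range (fun i => P (X (c + i) ⁻¹' sets (c + i))) n]
  refine Finset.prod_congr rfl fun j _ => ?_
  rw [Measure.map_apply (hXm _) (hs j)]
  have hc : c ≤ c + (j:ℕ) ∧ c + (j:ℕ) - c < n := ⟨Nat.le_add_right _ _, by omega⟩
  congr 1
  simp only [hsets, dif_pos hc]
  congr 1
  ext
  simp


lemma marg_eq (hXm : ∀ i, Measurable (X i)) (hXpm : ∀ ω i, X i ω = 1 ∨ X i ω = -1)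
    (h1 : ∀ i, P {ω | X i ω = 1} = 1/2) (h2 : ∀ i, P {ω | X i ω = -1} = 1/2)
    (i i' : ℕ) : P.map (X i) = P.map (X i') := by
  have hdisj : ∀ k, Disjoint {ω | X k ω = 1} {ω | X k ω = -1} := by
    intro k
    rw [Set.disjoint_left]
    intro ω ha hb
    simp only [mem_setOf_eq] at ha hb
    omega
  have hm2 : ∀ k, MeasurableSet {ω | X k ω = -1} := fun k => hXm k (measurableSet_singleton (-1))
  ext s hs
  rw [Measure.map_apply (hXm i) hs, Measure.map_apply (hXm i') hs]
  by_cases ha : (1:ℤ) ∈ s <;> by_cases hb : (-1:ℤ) ∈ s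
  · have key : ∀ k, X k ⁻¹' s = {ω | X k ω = 1} ∪ {ω | X k ω = -1} := by
      intro k
      ext ω
      simp only [mem_preimage, mem_union, mem_setOf_eq]
      constructor
      · intro _; exact hXpm ω k
      · rintro (h | h) <;> rw [h] <;> assumption
    rw [key i, key i', measure_union (hdisj i) (hm2 i), measure_union (hdisj i') (hm2 i'),
      h1, h2, h1, h2]
  · have key : ∀ k, X k ⁻¹' s = {ω | X k ω = 1} := by
      intro k
      ext ω
      simp only [mem_preimage, mem_setOf_eq]
      constructor
      · intro h; rcases hXpm ω k with hc | hc
        · exact hc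
        · rw [hc] at h; exact absurd h hb
      · intro h; rw [h]; exact ha
    rw [key i, key i', h1, h1]
  · have key : ∀ k, X k ⁻¹' s = {ω | X k ω = -1} := by
      intro k
      ext ω
      simp only [mem_preimage, mem_setOf_eq]
      constructor
      · intro h; rcases hXpm ω k with hc | hc
        · rw [hc] at h; exact absurd h ha
        · exact hc
      · intro h; rw [h]; exact hb
    rw [key i, key i', h2, h2]
  · have key : ∀ k, X k ⁻¹' s = ∅ := by
      intro k
      ext ω
      simp only [mem_preimage, mem_empty_iff_false, iff_false]
      intro h
      rcases hXpm ω k with hc | hc <;> rw [hc] at h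
      · exact ha h
      · exact hb h
    rw [key i, key i']


lemma map_V_eq (hXm : ∀ i, Measurable (X i)) (hXpm : ∀ ω i, X i ω = 1 ∨ X i ω = -1)
    (hind : iIndepFun X P)
    (h1 : ∀ i, P {ω | X i ω = 1} = 1/2) (h2 : ∀ i, P {ω | X i ω = -1} = 1/2) (n : ℕ) :
    P.map (fun ω (j : Fin n) => X (1 + (j : ℕ)) ω)
      = P.map (fun ω (j : Fin n) => X (0 + (j : ℕ)) ω) := by
  rw [joint_law P X hXm hind 1 n, joint_law P X hXm hind 0 n]
  congr 1
  funext j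
  exact marg_eq P X hXm hXpm h1 h2 _ _

def CSet (n : ℕ) (j : ℤ) : Set Ω := {ω | ∃ m, m ≤ n ∧ j ≤ ∑ i ∈ Finset.range m, X i ω}

def CSet' (n : ℕ) (j : ℤ) : Set Ω := {ω | ∃ m, m ≤ n ∧ j ≤ ∑ i ∈ Finset.range m, X (i + 1) ω}

def ASet (j : ℤ) : Set Ω := {ω | ∃ m, j ≤ ∑ i ∈ Finset.range m, X i ω}

def ASet' (j : ℤ) : Set Ω := {ω | ∃ m, j ≤ ∑ i ∈ Finset.range m, X (i + 1) ω}

lemma CSet_eq (n : ℕ) (j : ℤ) :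
    CSet X n j = (fun ω (jj : Fin n) => X (0 + (jj : ℕ)) ω) ⁻¹' TSet n j := by
  ext ω
  simp only [CSet, TSet, mem_setOf_eq, mem_preimage]
  have key : ∀ m, m ≤ n → pSum n (fun jj : Fin n => X (0 + (jj:ℕ)) ω) m
      = ∑ i ∈ Finset.range m, X i ω := by
    intro m hm
    refine Finset.sum_congr rfl fun i hi => ?_
    rw [Finset.mem_range] at hi
    rw [dif_pos (by omega : i < n)]
    simp
  constructor
  · rintro ⟨m, hm, hsum⟩; exact ⟨m, hm, by rwa [key m hm]⟩
  · rintro ⟨m, hm, hsum⟩; exact ⟨m, hm, by rwa [key m hm] at hsum⟩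

lemma CSet'_eq (n : ℕ) (j : ℤ) :
    CSet' X n j = (fun ω (jj : Fin n) => X (1 + (jj : ℕ)) ω) ⁻¹' TSet n j := by
  ext ω
  simp only [CSet', TSet, mem_setOf_eq, mem_preimage]
  have key : ∀ m, m ≤ n → pSum n (fun jj : Fin n => X (1 + (jj:ℕ)) ω) m
      = ∑ i ∈ Finset.range m, X (i + 1) ω := by
    intro m hm
    refine Finset.sum_congr rfl fun i hi => ?_
    rw [Finset.mem_range] at hi
    rw [dif_pos (by omega : i < n)]
    simp [Nat.add_comm]
  constructor
  · rintro ⟨m, hm, hsum⟩; exact ⟨m, hm, by rwa [key m hm]⟩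
  · rintro ⟨m, hm, hsum⟩; exact ⟨m, hm, by rwa [key m hm] at hsum⟩

lemma measurableSet_CSet (hXm : ∀ i, Measurable (X i)) (n : ℕ) (j : ℤ) :
    MeasurableSet (CSet X n j) := by
  rw [CSet_eq]
  exact measurable_V X hXm 0 n (measurableSet_TSet n j)

lemma measurableSet_CSet' (hXm : ∀ i, Measurable (X i)) (n : ℕ) (j : ℤ) :
    MeasurableSet (CSet' X n j) := by
  rw [CSet'_eq]
  exact measurable_V X hXm 1 n (measurableSet_TSet n j)

lemma measurableSet_ASet (hXm : ∀ i, Measurable (X i)) (j : ℤ) :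
    MeasurableSet (ASet X j) := by
  have h : ASet X j = ⋃ m, {ω | j ≤ ∑ i ∈ Finset.range m, X i ω} := by
    ext ω; simp [ASet]
  rw [h]
  exact MeasurableSet.iUnion fun m => measurableSet_le measurable_const
    (Finset.measurable_sum _ fun i _ => hXm i)

lemma measurableSet_ASet' (hXm : ∀ i, Measurable (X i)) (j : ℤ) :
    MeasurableSet (ASet' X j) := by
  have h : ASet' X j = ⋃ m, {ω | j ≤ ∑ i ∈ Finset.range m, X (i + 1) ω} := by
    ext ω; simp [ASet']
  rw [h]
  exact MeasurableSet.iUnion fun m => measurableSet_le measurable_const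
    (Finset.measurable_sum _ fun i _ => hXm _)

lemma CSet_mono (j : ℤ) : Monotone fun n => CSet X n j := by
  intro n n' hnn ω hω
  obtain ⟨m, hm, hs⟩ := hω
  exact ⟨m, le_trans hm hnn, hs⟩

lemma CSet'_mono (j : ℤ) : Monotone fun n => CSet' X n j := by
  intro n n' hnn ω hω
  obtain ⟨m, hm, hs⟩ := hω
  exact ⟨m, le_trans hm hnn, hs⟩

lemma ASet_eq_iUnion (j : ℤ) : ASet X j = ⋃ n, CSet X n j := by
  ext ω
  simp only [ASet, CSet, mem_setOf_eq, mem_iUnion]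
  constructor
  · rintro ⟨m, hm⟩; exact ⟨m, m, le_refl m, hm⟩
  · rintro ⟨n, m, _, hm⟩; exact ⟨m, hm⟩

lemma ASet'_eq_iUnion (j : ℤ) : ASet' X j = ⋃ n, CSet' X n j := by
  ext ω
  simp only [ASet', CSet', mem_setOf_eq, mem_iUnion]
  constructor
  · rintro ⟨m, hm⟩; exact ⟨m, m, le_refl m, hm⟩
  · rintro ⟨n, m, _, hm⟩; exact ⟨m, hm⟩

lemma C_shift (hXm : ∀ i, Measurable (X i)) (hXpm : ∀ ω i, X i ω = 1 ∨ X i ω = -1)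
    (hind : iIndepFun X P)
    (h1 : ∀ i, P {ω | X i ω = 1} = 1/2) (h2 : ∀ i, P {ω | X i ω = -1} = 1/2) (n : ℕ) (j : ℤ) :
    P (CSet' X n j) = P (CSet X n j) := by
  rw [CSet_eq, CSet'_eq,
    ← Measure.map_apply (measurable_V X hXm 1 n) (measurableSet_TSet n j),
    ← Measure.map_apply (measurable_V X hXm 0 n) (measurableSet_TSet n j),
    map_V_eq P X hXm hXpm hind h1 h2 n]

lemma A_shift (hXm : ∀ i, Measurable (X i)) (hXpm : ∀ ω i, X i ω = 1 ∨ X i ω = -1)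
    (hind : iIndepFun X P)
    (h1 : ∀ i, P {ω | X i ω = 1} = 1/2) (h2 : ∀ i, P {ω | X i ω = -1} = 1/2) (j : ℤ) :
    P (ASet' X j) = P (ASet X j) := by
  rw [ASet_eq_iUnion, ASet'_eq_iUnion,
    Directed.measure_iUnion ((CSet'_mono X j).directed_le),
    Directed.measure_iUnion ((CSet_mono X j).directed_le)]
  exact iSup_congr fun n => C_shift P X hXm hXpm hind h1 h2 n j

lemma indep_V (hXm : ∀ i, Measurable (X i))
    (hind : iIndepFun X P) (n : ℕ) :
    IndepFun (X 0) (fun ω (jj : Fin n) => X (1 + (jj : ℕ)) ω) P := by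
  have hdisj : Disjoint ({0} : Finset ℕ) (Finset.Ico 1 (n + 1)) := by
    rw [Finset.disjoint_left]
    intro a ha hb
    rw [Finset.mem_singleton] at ha
    rw [Finset.mem_Ico] at hb
    omega
  have h := hind.indepFun_finset {0} (Finset.Ico 1 (n + 1)) hdisj hXm
  have hφ : Measurable fun g : ({0} : Finset ℕ) → ℤ => g ⟨0, Finset.mem_singleton_self 0⟩ :=
    measurable_pi_apply _
  have hψ : Measurable fun (g : (Finset.Ico 1 (n + 1) : Finset ℕ) → ℤ) (jj : Fin n) =>
      g ⟨1 + (jj : ℕ), Finset.mem_Ico.mpr ⟨by omega, by have := jj.isLt; omega⟩⟩ :=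
    measurable_pi_lambda _ fun _ => measurable_pi_apply _
  exact h.comp hφ hψ

lemma indep_event (hXm : ∀ i, Measurable (X i))
    (hind : iIndepFun X P) (n : ℕ) (j : ℤ) (e : ℤ) :
    P ({ω | X 0 ω = e} ∩ CSet' X n j) = P {ω | X 0 ω = e} * P (CSet' X n j) := by
  have h := (indep_V P X hXm hind n).measure_inter_preimage_eq_mul {e} (TSet n j)
    (measurableSet_singleton e) (measurableSet_TSet n j)
  rw [CSet'_eq]
  exact h

lemma indep_event_A (hXm : ∀ i, Measurable (X i))
    (hind : iIndepFun X P) (j : ℤ) (e : ℤ) :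
    P ({ω | X 0 ω = e} ∩ ASet' X j) = P {ω | X 0 ω = e} * P (ASet' X j) := by
  have hu : {ω | X 0 ω = e} ∩ ASet' X j = ⋃ n, ({ω | X 0 ω = e} ∩ CSet' X n j) := by
    rw [ASet'_eq_iUnion, inter_iUnion]
  have hmono : Monotone fun n => {ω | X 0 ω = e} ∩ CSet' X n j :=
    fun n n' hnn => inter_subset_inter_right _ (CSet'_mono X j hnn)
  rw [hu, Directed.measure_iUnion hmono.directed_le, ASet'_eq_iUnion,
    Directed.measure_iUnion ((CSet'_mono X j).directed_le), ENNReal.mul_iSup]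
  exact iSup_congr fun n => indep_event P X hXm hind n j e

lemma A_split (hXpm : ∀ ω i, X i ω = 1 ∨ X i ω = -1) (j : ℤ) (hj : 1 ≤ j) :
    ASet X j = ({ω | X 0 ω = 1} ∩ ASet' X (j - 1)) ∪ ({ω | X 0 ω = -1} ∩ ASet' X (j + 1)) := by
  ext ω
  simp only [ASet, ASet', mem_union, mem_inter_iff, mem_setOf_eq]
  constructor
  · rintro ⟨m, hm⟩
    obtain ⟨m', rfl⟩ : ∃ m', m = m' + 1 := by
      rcases m with _ | m'
      · exfalso; simp at hm; omega
      · exact ⟨m', rfl⟩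
    rw [Finset.sum_range_succ'] at hm
    rcases hXpm ω 0 with h0 | h0
    · exact Or.inl ⟨h0, m', by rw [h0] at hm; omega⟩
    · exact Or.inr ⟨h0, m', by rw [h0] at hm; omega⟩
  · rintro (⟨h0, m', hm⟩ | ⟨h0, m', hm⟩) <;> refine ⟨m' + 1, ?_⟩ <;>
      rw [Finset.sum_range_succ', h0] <;> omega

lemma A_rec (hXm : ∀ i, Measurable (X i)) (hXpm : ∀ ω i, X i ω = 1 ∨ X i ω = -1)
    (hind : iIndepFun X P)
    (h1 : ∀ i, P {ω | X i ω = 1} = 1/2) (h2 : ∀ i, P {ω | X i ω = -1} = 1/2)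
    (j : ℤ) (hj : 1 ≤ j) :
    P (ASet X j) = 1/2 * P (ASet X (j - 1)) + 1/2 * P (ASet X (j + 1)) := by
  rw [A_split X hXpm j hj]
  have hdisj : Disjoint ({ω | X 0 ω = 1} ∩ ASet' X (j - 1))
      ({ω | X 0 ω = -1} ∩ ASet' X (j + 1)) := by
    rw [Set.disjoint_left]
    rintro ω ⟨ha, _⟩ ⟨hb, _⟩
    simp only [mem_setOf_eq] at ha hb
    omega
  have hm2 : MeasurableSet ({ω | X 0 ω = -1} ∩ ASet' X (j + 1)) :=
    (hXm 0 (measurableSet_singleton (-1))).inter (measurableSet_ASet' X hXm (j + 1))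
  rw [measure_union hdisj hm2, indep_event_A P X hXm hind, indep_event_A P X hXm hind,
    h1 0, h2 0, A_shift P X hXm hXpm hind h1 h2, A_shift P X hXm hXpm hind h1 h2]

lemma prob_A_one (hXm : ∀ i, Measurable (X i)) (hXpm : ∀ ω i, X i ω = 1 ∨ X i ω = -1)
    (hind : iIndepFun X P)
    (h1 : ∀ i, P {ω | X i ω = 1} = 1/2) (h2 : ∀ i, P {ω | X i ω = -1} = 1/2)
    (k : ℕ) : P (ASet X (k : ℤ)) = 1 := by
  have hne : ∀ j : ℤ, P (ASet X j) ≠ ⊤ := fun j => measure_ne_top P _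
  set u : ℕ → ℝ := fun k => (P (ASet X (k : ℤ))).toReal with hu
  have hu0 : u 0 = 1 := by
    have hA : ASet X ((0:ℕ) : ℤ) = univ := eq_univ_of_forall fun ω => ⟨0, by simp⟩
    simp only [hu, hA, measure_univ, ENNReal.toReal_one]
  have hanti : ∀ a b : ℤ, a ≤ b → ASet X b ⊆ ASet X a := by
    rintro a b hab ω ⟨m, hm⟩
    exact ⟨m, le_trans hab hm⟩
  have hrec : ∀ k : ℕ, u (k + 1) = 1/2 * u k + 1/2 * u (k + 2) := by
    intro k
    have h := A_rec P X hXm hXpm hind h1 h2 ((k:ℤ) + 1) (by omega)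
    have e1 : ((k:ℤ) + 1) - 1 = ((k:ℕ) : ℤ) := by ring
    have e2 : ((k:ℤ) + 1) + 1 = (((k + 2 : ℕ)) : ℤ) := by push_cast; ring
    have e3 : ((k:ℤ) + 1) = (((k + 1 : ℕ)) : ℤ) := by push_cast; ring
    rw [e1, e2, e3] at h
    have htr := congrArg ENNReal.toReal h
    rw [ENNReal.toReal_add (ENNReal.mul_ne_top (by norm_num) (hne _))
        (ENNReal.mul_ne_top (by norm_num) (hne _)),
      ENNReal.toReal_mul, ENNReal.toReal_mul] at htr
    have hhalf : ((1/2 : ℝ≥0∞)).toReal = 1/2 := by norm_num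
    rw [hhalf] at htr
    exact htr
  have hd : ∀ k : ℕ, u k - u (k + 1) = u 0 - u 1 := by
    intro k
    induction k with
    | zero => rfl
    | succ k IH => have := hrec k; rw [← IH]; linarith
  have htel : ∀ k : ℕ, u 0 - u k = k * (u 0 - u 1) := by
    intro k
    induction k with
    | zero => simp
    | succ k IH =>
      have := hd k
      push_cast
      linarith
  have hub : ∀ k : ℕ, 0 ≤ u k := fun k => ENNReal.toReal_nonneg
  have hdle : u 0 - u 1 ≤ 0 := by
    by_contra hpos
    push_neg at hpos
    obtain ⟨k, hk⟩ := exists_nat_gt (1 / (u 0 - u 1))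
    have hgt : 1 < (k : ℝ) * (u 0 - u 1) := (div_lt_iff₀ hpos).mp hk
    have h1k := htel k
    have h2k := hub k
    linarith [hu0]
  have hdge : 0 ≤ u 0 - u 1 := by
    have hsub : ASet X ((1:ℕ) : ℤ) ⊆ ASet X ((0:ℕ) : ℤ) := hanti _ _ (by omega)
    have := ENNReal.toReal_mono (hne _) (measure_mono hsub)
    simpa [hu] using this
  have hd0 : u 0 - u 1 = 0 := le_antisymm hdle hdge
  have huk : u k = 1 := by
    have := htel k
    rw [hd0, mul_zero] at this
    linarith [hu0]
  have := huk
  rw [hu] at this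
  have h1' : (P (ASet X (k : ℤ))).toReal = (1 : ℝ≥0∞).toReal := by simpa using this
  exact (ENNReal.toReal_eq_toReal_iff' (hne _) ENNReal.one_ne_top).mp h1'

lemma ae_unbounded (hXm : ∀ i, Measurable (X i)) (hXpm : ∀ ω i, X i ω = 1 ∨ X i ω = -1)
    (hind : iIndepFun X P)
    (h1 : ∀ i, P {ω | X i ω = 1} = 1/2) (h2 : ∀ i, P {ω | X i ω = -1} = 1/2) :
    ∀ᵐ ω ∂P, ∀ m : ℤ, ∃ nn, m < ∑ i ∈ Finset.range nn, X i ω := by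
  have hae : ∀ k : ℕ, ∀ᵐ ω ∂P, ω ∈ ASet X (k : ℤ) := by
    intro k
    have hm := measurableSet_ASet X hXm ((k:ℕ) : ℤ)
    have hp := prob_A_one P X hXm hXpm hind h1 h2 k
    rw [← prob_compl_eq_zero_iff hm] at hp
    exact ae_iff.mpr hp
  filter_upwards [ae_all_iff.mpr hae] with ω hω m
  obtain ⟨nn, h⟩ := hω (m + 1).toNat
  refine ⟨nn, lt_of_lt_of_le ?_ h⟩
  have := Int.self_le_toNat (m + 1)
  omega


end CVaux

/-- For `τ_l + 1 ≤ j ≤ τ_{l+1}` one has `(-1)^l X_1 = X_{τ_l+1}`,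
and consequently `X̄_j = X_{τ_l+1} X_{j+1}`; almost surely for a simple random walk. -/
theorem cv_sign_eq_inc_tau {Ω : Type*} [MeasurableSpace Ω] (P : Measure Ω)
    [IsProbabilityMeasure P] (S : Ω → ℕ → ℤ) (hS : IsSRW P S) :
    ∀ᵐ ω ∂P, ∀ l j : ℕ, cvTau (S ω) l + 1 ≤ j → j ≤ cvTau (S ω) (l + 1) →
      (-1) ^ l * inc (S ω) 1 = inc (S ω) (cvTau (S ω) l + 1) ∧
      cvBarX (S ω) j = inc (S ω) (cvTau (S ω) l + 1) * inc (S ω) (j + 1) := by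
  obtain ⟨h00, hpm, hmeas, hind, h1, h2⟩ := hS
  set X : ℕ → Ω → ℤ := fun i ω => S ω (i + 1) - S ω i with hX
  have hXm : ∀ i, Measurable (X i) := fun i => (hmeas (i + 1)).sub (hmeas i)
  have hXpm : ∀ ω i, X i ω = 1 ∨ X i ω = -1 := fun ω i => hpm ω i
  have hsum : ∀ ω m, ∑ i ∈ Finset.range m, X i ω = S ω m := by
    intro ω m
    induction m with
    | zero => simp [h00 ω]
    | succ m IH => rw [Finset.sum_range_succ, IH]; simp [hX]
  set Y : ℕ → Ω → ℤ := fun i ω => -(X i ω) with hY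
  have hYm : ∀ i, Measurable (Y i) := fun i => (hXm i).neg
  have hYpm : ∀ ω i, Y i ω = 1 ∨ Y i ω = -1 := by
    intro ω i
    rcases hXpm ω i with h | h
    · right; simp [hY, h]
    · left; simp [hY, h]
  have hYind : iIndepFun Y P :=
    hind.comp (fun _ => Neg.neg) (fun _ => measurable_neg)
  have hY1 : ∀ i, P {ω | Y i ω = 1} = 1/2 := by
    intro i
    have hseteq : {ω | Y i ω = 1} = {ω | X i ω = -1} := by
      ext ω
      simp only [hY, Set.mem_setOf_eq]
      omega
    rw [hseteq]; exact h2 i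
  have hY2 : ∀ i, P {ω | Y i ω = -1} = 1/2 := by
    intro i
    have hseteq : {ω | Y i ω = -1} = {ω | X i ω = 1} := by
      ext ω
      simp only [hY, Set.mem_setOf_eq]
      omega
    rw [hseteq]; exact h1 i
  have hup := CVaux.ae_unbounded P X hXm hXpm hind h1 h2
  have hdown := CVaux.ae_unbounded P Y hYm hYpm hYind hY1 hY2
  filter_upwards [hup, hdown] with ω hu hd
  have hup' : ∀ m : ℤ, ∃ n, m < S ω n := by
    intro m
    obtain ⟨nn, h⟩ := hu m
    exact ⟨nn, by rwa [hsum ω nn] at h⟩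
  have hdown' : ∀ m : ℤ, ∃ n, S ω n < m := by
    intro m
    obtain ⟨nn, h⟩ := hd (-m)
    have hsY : ∑ i ∈ Finset.range nn, Y i ω = -(S ω nn) := by
      simp only [hY]
      rw [Finset.sum_neg_distrib, hsum ω nn]
    rw [hsY] at h
    exact ⟨nn, by omega⟩
  exact det_main (h00 ω) (hpm ω) (unbounded_infChg (h00 ω) (hpm ω) hup' hdown')

end
end

section
/- For a simple random walk S, the first increment S_1 is independent of the σ-field σ(T(S)) generated by the whole Csáki–Vincze transform T(S). -/
open MeasureTheory ProbabilityTheory Filter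

noncomputable section

/-- Reconstructed walk from products `z k = X 0 * X k`. -/
def recW (z : ℕ → ℤ) (i : ℕ) : ℤ := ∑ k ∈ Finset.range i, (if k = 0 then 1 else z k)

def recEll (z : ℕ → ℤ) (j : ℕ) : ℕ :=
  ((Finset.range j).filter fun i => 0 < i ∧ recW z (i - 1) * recW z (i + 1) < 0).card

def recCV (z : ℕ → ℤ) (n : ℕ) : ℤ :=
  ∑ j ∈ Finset.range n, (-1) ^ recEll z (j + 1) * z (j + 1)

lemma recW_congr {z z' : ℕ → ℤ} {i : ℕ} (h : ∀ k, 1 ≤ k → k < i → z k = z' k) :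
    recW z i = recW z' i := by
  unfold recW
  refine Finset.sum_congr rfl fun k hk => ?_
  rcases Nat.eq_zero_or_pos k with h0 | h0
  · simp [h0]
  · simp only [Finset.mem_range] at hk
    rw [if_neg (by omega), if_neg (by omega), h k h0 hk]

lemma recEll_congr {z z' : ℕ → ℤ} {m : ℕ} (h : ∀ k, 1 ≤ k → k < m → z k = z' k) :
    recEll z m = recEll z' m := by
  unfold recEll
  congr 1
  refine Finset.filter_congr fun i hi => ?_
  simp only [Finset.mem_range] at hi
  have h1 : recW z (i - 1) = recW z' (i - 1) := recW_congr fun k hk hk' => h k hk (by omega)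
  have h2 : recW z (i + 1) = recW z' (i + 1) := recW_congr fun k hk hk' => h k hk (by omega)
  rw [h1, h2]

lemma recCV_congr {z z' : ℕ → ℤ} {n : ℕ} (h : ∀ k, 1 ≤ k → k ≤ n → z k = z' k) :
    recCV z n = recCV z' n := by
  unfold recCV
  refine Finset.sum_congr rfl fun j hj => ?_
  simp only [Finset.mem_range] at hj
  rw [recEll_congr (fun k hk hk' => h k hk (by omega)), h (j + 1) (by omega) (by omega)]

lemma CV_eq_recCV (s : ℕ → ℤ) (h0 : s 0 = 0)
    (hpm : ∀ i, s (i + 1) - s i = 1 ∨ s (i + 1) - s i = -1) (n : ℕ) :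
    CV s n = recCV (fun k => s 1 * (s (k + 1) - s k)) n := by
  have hx1 : s 1 * s 1 = 1 := by
    have h := hpm 0
    rw [h0] at h
    norm_num at h
    rcases h with h | h <;> rw [h] <;> norm_num
  have hW : ∀ i, recW (fun k => s 1 * (s (k + 1) - s k)) i = s 1 * s i := by
    intro i
    induction i with
    | zero => simp [recW, h0]
    | succ i ih =>
      rw [recW, Finset.sum_range_succ, ← recW, ih]
      rcases Nat.eq_zero_or_pos i with hi | hi
      · subst hi; simp [h0, hx1]
      · rw [if_neg (by omega)]; ring
  have hEll : ∀ j, recEll (fun k => s 1 * (s (k + 1) - s k)) j = cvEll s j := by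
    intro j
    unfold recEll cvEll
    congr 1
    refine Finset.filter_congr fun i hi => ?_
    rw [hW, hW]
    have : s 1 * s (i - 1) * (s 1 * s (i + 1)) = s (i - 1) * s (i + 1) := by
      calc s 1 * s (i - 1) * (s 1 * s (i + 1)) = s 1 * s 1 * (s (i - 1) * s (i + 1)) := by ring
      _ = s (i - 1) * s (i + 1) := by rw [hx1]; ring
    rw [this]
  unfold CV recCV
  refine Finset.sum_congr rfl fun j hj => ?_
  rw [hEll]
  unfold cvBarX inc
  have e1 : (1 : ℕ) - 1 = 0 := rfl
  have e2 : j + 1 + 1 - 1 = j + 1 := rfl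
  rw [e1, e2, h0]
  ring


section Aux

variable {Ω : Type*} [MeasurableSpace Ω] (P : Measure Ω) [IsProbabilityMeasure P]

/-- `pr c` is the probability that an increment equals `c`. -/
def pr (c : ℤ) : ENNReal := if c = 1 ∨ c = -1 then 1 / 2 else 0

variable (X : ℕ → Ω → ℤ)

/-- The tuple of products `X 0 * X (k+1)`, `k < n`. -/
def prodTuple (n : ℕ) : Ω → Fin n → ℤ := fun ω k => X 0 ω * X (k + 1 : ℕ) ω

variable {P X}

set_option linter.unusedSectionVars false
set_option linter.unnecessarySimpa false
set_option linter.unusedVariables false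

lemma comap_comp_le {α β γ : Type*} [MeasurableSpace α] [MeasurableSpace β] [MeasurableSpace γ]
    (f : α → β) (g : β → γ) (hg : Measurable g) :
    MeasurableSpace.comap (g ∘ f) inferInstance ≤ MeasurableSpace.comap f inferInstance := by
  rw [← MeasurableSpace.comap_comp]
  exact MeasurableSpace.comap_mono (measurable_iff_comap_le.mp hg)

section ProbPart

variable (hpm : ∀ ω i, X i ω = 1 ∨ X i ω = -1)
  (hmeas : ∀ i, Measurable (X i))
  (hindep : iIndepFun X P)
  (hdist : ∀ i c, P {ω | X i ω = c} = pr c)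

section
include hpm hmeas hindep hdist

lemma prodTuple_measurable (n : ℕ) : Measurable (prodTuple X n) :=
  measurable_pi_lambda _ fun k => (hmeas 0).mul (hmeas _)

lemma pr_mul {a : ℤ} (ha : a = 1 ∨ a = -1) (c : ℤ) : pr (a * c) = pr c := by
  unfold pr
  have : (a * c = 1 ∨ a * c = -1) ↔ (c = 1 ∨ c = -1) := by
    rcases ha with h | h <;> subst h <;> omega
  rw [if_congr this rfl rfl]

/-- L1: product rule for singleton events. -/
lemma L1 (m : ℕ) (b : ℕ → ℤ) :
    P (⋂ i ∈ Finset.range m, X i ⁻¹' {b i}) = ∏ i ∈ Finset.range m, pr (b i) := by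
  rw [hindep.measure_inter_preimage_eq_mul (Finset.range m)
    (sets := fun i => {b i}) (fun i _ => measurableSet_singleton _)]
  refine Finset.prod_congr rfl fun i _ => ?_
  rw [show X i ⁻¹' {b i} = {ω | X i ω = b i} from rfl, hdist i (b i)]

/-- L2: singleton joint probability. -/
lemma L2 (n : ℕ) (v : Fin n → ℤ) {a : ℤ} (ha : a = 1 ∨ a = -1) :
    P ((X 0 ⁻¹' {a}) ∩ (prodTuple X n ⁻¹' {v}))
      = 1 / 2 * ∏ k ∈ Finset.range n, pr (if h : k < n then v ⟨k, h⟩ else 0) := by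
  have haa : a * a = 1 := by rcases ha with h | h <;> subst h <;> norm_num
  set b : ℕ → ℤ := fun i => if h : 0 < i ∧ i - 1 < n then a * v ⟨i - 1, h.2⟩ else a with hb
  have hset : (X 0 ⁻¹' {a}) ∩ (prodTuple X n ⁻¹' {v})
      = ⋂ i ∈ Finset.range (n + 1), X i ⁻¹' {b i} := by
    ext ω
    simp only [Set.mem_inter_iff, Set.mem_preimage, Set.mem_singleton_iff, Set.mem_iInter,
      Finset.mem_range, prodTuple, funext_iff]
    constructor
    · rintro ⟨hA, hV⟩ i hi
      rcases Nat.eq_zero_or_pos i with h0 | h0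
      · subst h0; simpa [hb] using hA
      · obtain ⟨k, rfl⟩ : ∃ k, i = k + 1 := ⟨i - 1, by omega⟩
        have hk : k < n := by omega
        have := hV ⟨k, hk⟩
        rw [hA] at this
        have hXk : X (k + 1) ω = a * v ⟨k, hk⟩ := by
          calc X (k + 1) ω = a * a * X (k + 1) ω := by rw [haa]; ring
          _ = a * (a * X (k + 1) ω) := by ring
          _ = a * v ⟨k, hk⟩ := by rw [this]
        rw [hXk, hb]
        simp only []
        rw [dif_pos (show 0 < k + 1 ∧ k + 1 - 1 < n from ⟨by omega, by simpa using hk⟩)]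
        exact congrArg (a * v ·) (Fin.ext (by simp))
    · intro h
      have hA : X 0 ω = a := by simpa [hb] using h 0 (by omega)
      refine ⟨hA, fun k => ?_⟩
      have hk := h (k + 1) (by omega)
      rw [hb] at hk
      simp only [] at hk
      rw [dif_pos ⟨by omega, by simpa using k.isLt⟩] at hk
      rw [hA, hk]
      rw [← mul_assoc, haa, one_mul]
      exact congrArg v (Fin.ext (by simp))
  rw [hset, L1 hpm hmeas hindep hdist (n + 1) b, Finset.prod_range_succ']
  have hb0 : pr (b 0) = 1 / 2 := by
    rw [hb]; simp only []
    rw [dif_neg (by omega)]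
    unfold pr; rw [if_pos ha]
  rw [hb0, mul_comm]
  congr 1
  refine Finset.prod_congr rfl fun k hk => ?_
  simp only [Finset.mem_range] at hk
  rw [hb]; simp only []
  rw [dif_pos (show 0 < k + 1 ∧ k + 1 - 1 < n from ⟨by omega, by simpa using hk⟩), dif_pos hk,
    pr_mul hpm hmeas hindep hdist ha]
  exact congrArg pr (congrArg v (Fin.ext (by simp)))

/-- L3: singleton probability of the product tuple. -/
lemma L3 (n : ℕ) (v : Fin n → ℤ) :
    P (prodTuple X n ⁻¹' {v})
      = ∏ k ∈ Finset.range n, pr (if h : k < n then v ⟨k, h⟩ else 0) := by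
  have hsplit : prodTuple X n ⁻¹' {v}
      = ((X 0 ⁻¹' {1}) ∩ (prodTuple X n ⁻¹' {v}))
        ∪ ((X 0 ⁻¹' {-1}) ∩ (prodTuple X n ⁻¹' {v})) := by
    ext ω
    simp only [Set.mem_union, Set.mem_inter_iff, Set.mem_preimage, Set.mem_singleton_iff]
    constructor
    · intro h
      rcases hpm ω 0 with h0 | h0
      · exact Or.inl ⟨h0, h⟩
      · exact Or.inr ⟨h0, h⟩
    · rintro (⟨_, h⟩ | ⟨_, h⟩) <;> exact h
  have hdisj : Disjoint ((X 0 ⁻¹' {1}) ∩ (prodTuple X n ⁻¹' {v}))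
      ((X 0 ⁻¹' {-1}) ∩ (prodTuple X n ⁻¹' {v})) := by
    refine Set.disjoint_left.mpr ?_
    rintro ω ⟨h1, -⟩ ⟨h2, -⟩
    simp only [Set.mem_preimage, Set.mem_singleton_iff] at h1 h2
    omega
  have hmeas2 : MeasurableSet ((X 0 ⁻¹' {-1}) ∩ (prodTuple X n ⁻¹' {v})) :=
    ((hmeas 0) (measurableSet_singleton _)).inter
      ((prodTuple_measurable hpm hmeas hindep hdist n) (measurableSet_singleton _))
  rw [hsplit, measure_union hdisj hmeas2,
    L2 hpm hmeas hindep hdist n v (Or.inl rfl), L2 hpm hmeas hindep hdist n v (Or.inr rfl),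
    ← add_mul, ENNReal.add_halves, one_mul]

/-- L4. -/
lemma L4 (n : ℕ) (v : Fin n → ℤ) {a : ℤ} (ha : a = 1 ∨ a = -1) :
    P ((X 0 ⁻¹' {a}) ∩ (prodTuple X n ⁻¹' {v}))
      = 1 / 2 * P (prodTuple X n ⁻¹' {v}) := by
  rw [L2 hpm hmeas hindep hdist n v ha, L3 hpm hmeas hindep hdist n v]

/-- L5: general sets. -/
lemma L5 (n : ℕ) (t : Set (Fin n → ℤ)) {a : ℤ} (ha : a = 1 ∨ a = -1) :
    P ((X 0 ⁻¹' {a}) ∩ (prodTuple X n ⁻¹' t))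
      = 1 / 2 * P (prodTuple X n ⁻¹' t) := by
  have hWm := prodTuple_measurable hpm hmeas hindep hdist n
  have ht : t = ⋃ v ∈ t, {v} := by simp
  have hpre : prodTuple X n ⁻¹' t = ⋃ v ∈ t, prodTuple X n ⁻¹' {v} := by
    rw [ht]; simp [Set.preimage_iUnion]
  have hdisj : t.PairwiseDisjoint (fun v => prodTuple X n ⁻¹' {v}) := by
    intro u hu w hw huw
    exact Set.disjoint_left.mpr fun ω h1 h2 => huw (by
      simp only [Set.mem_preimage, Set.mem_singleton_iff] at h1 h2
      rw [← h1, ← h2])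
  have hdisj2 : t.PairwiseDisjoint (fun v => (X 0 ⁻¹' {a}) ∩ prodTuple X n ⁻¹' {v}) := by
    intro u hu w hw huw
    exact (hdisj hu hw huw).mono Set.inter_subset_right Set.inter_subset_right
  have hc := t.to_countable
  rw [hpre, Set.inter_iUnion₂]
  rw [measure_biUnion hc hdisj2 (fun v _ =>
      ((hmeas 0) (measurableSet_singleton _)).inter (hWm (measurableSet_singleton _))),
    measure_biUnion hc hdisj (fun v _ => hWm (measurableSet_singleton _))]
  rw [← ENNReal.tsum_mul_left]
  exact tsum_congr fun v => L4 hpm hmeas hindep hdist n v ha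

/-- L6: independence of `X 0` and the product tuple. -/
lemma L6 (n : ℕ) : IndepFun (X 0) (prodTuple X n) P := by
  rw [indepFun_iff_measure_inter_preimage_eq_mul]
  intro s t _ _
  have h12 : P (X 0 ⁻¹' {(1 : ℤ)}) = 1 / 2 := by
    rw [show X 0 ⁻¹' {(1:ℤ)} = {ω | X 0 ω = 1} from rfl, hdist 0 1]; unfold pr; simp
  have hn12 : P (X 0 ⁻¹' {(-1 : ℤ)}) = 1 / 2 := by
    rw [show X 0 ⁻¹' {(-1:ℤ)} = {ω | X 0 ω = -1} from rfl, hdist 0 (-1)]; unfold pr; simp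
  by_cases h1 : (1 : ℤ) ∈ s <;> by_cases h2 : (-1 : ℤ) ∈ s
  · have : X 0 ⁻¹' s = Set.univ := by
      ext ω; simp only [Set.mem_preimage, Set.mem_univ, iff_true]
      rcases hpm ω 0 with h | h <;> rw [h] <;> assumption
    rw [this, Set.univ_inter, measure_univ, one_mul]
  · have : X 0 ⁻¹' s = X 0 ⁻¹' {(1 : ℤ)} := by
      ext ω; simp only [Set.mem_preimage, Set.mem_singleton_iff]
      constructor
      · intro h; rcases hpm ω 0 with h0 | h0
        · exact h0
        · rw [h0] at h; exact absurd h h2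
      · intro h; rw [h]; exact h1
    rw [this, L5 hpm hmeas hindep hdist n t (Or.inl rfl), h12]
  · have : X 0 ⁻¹' s = X 0 ⁻¹' {(-1 : ℤ)} := by
      ext ω; simp only [Set.mem_preimage, Set.mem_singleton_iff]
      constructor
      · intro h; rcases hpm ω 0 with h0 | h0
        · rw [h0] at h; exact absurd h h1
        · exact h0
      · intro h; rw [h]; exact h2
    rw [this, L5 hpm hmeas hindep hdist n t (Or.inr rfl), hn12]
  · have : X 0 ⁻¹' s = ∅ := by
      ext ω; simp only [Set.mem_preimage, Set.mem_empty_iff_false, iff_false]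
      intro h; rcases hpm ω 0 with h0 | h0 <;> rw [h0] at h
      · exact h1 h
      · exact h2 h
    rw [this, Set.empty_inter, measure_empty, zero_mul]

end
end ProbPart
end Aux

/-- `S_1` is independent of `σ(T(S))`. -/
theorem cv_first_step_indep {Ω : Type*} [MeasurableSpace Ω] (P : Measure Ω)
    [IsProbabilityMeasure P] (S : Ω → ℕ → ℤ) (hS : IsSRW P S) :
    Indep (MeasurableSpace.comap (fun ω => S ω 1) inferInstance)
      (⨆ j : ℕ, MeasurableSpace.comap (fun ω => CV (S ω) j) inferInstance) P := by
  obtain ⟨h0, hpm', hmeas', hindep, h1, hneg⟩ := hS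
  set X : ℕ → Ω → ℤ := fun i ω => S ω (i + 1) - S ω i with hXdef
  have hpm : ∀ (ω : Ω) (i : ℕ), X i ω = 1 ∨ X i ω = -1 := hpm'
  have hmeas : ∀ i, Measurable (X i) := fun i => (hmeas' (i + 1)).sub (hmeas' i)
  have hdist : ∀ i c, P {ω | X i ω = c} = pr c := by
    intro i c
    by_cases hc1 : c = 1
    · subst hc1; unfold pr; rw [if_pos (Or.inl rfl)]; exact h1 i
    by_cases hc2 : c = -1
    · subst hc2; unfold pr; rw [if_pos (Or.inr rfl)]; exact hneg i
    have he : {ω | X i ω = c} = ∅ := by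
      ext ω
      simp only [Set.mem_setOf_eq, Set.mem_empty_iff_false, iff_false]
      intro h
      rcases hpm ω i with h' | h' <;> rw [h] at h'
      · exact hc1 h'
      · exact hc2 h'
    rw [he, measure_empty]
    unfold pr
    rw [if_neg (by tauto)]
  -- independence of X 0 and each product tuple, as σ-algebras
  have hL6 : ∀ n : ℕ, Indep
      (MeasurableSpace.comap (prodTuple X n) inferInstance)
      (MeasurableSpace.comap (X 0) inferInstance) P :=
    fun n => (L6 hpm hmeas hindep hdist n).symm
  have hmono : Monotone fun n : ℕ =>
      MeasurableSpace.comap (prodTuple X n) (inferInstance : MeasurableSpace (Fin n → ℤ)) := by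
    intro m n hmn
    have hfun : prodTuple X m = (fun (z : Fin n → ℤ) (k : Fin m) => z (Fin.castLE hmn k))
        ∘ prodTuple X n := by
      funext ω k
      simp only [Function.comp, prodTuple, Fin.coe_castLE]
    simp only []
    rw [hfun]
    exact comap_comp_le _ _ (measurable_of_countable _)
  have hle : ∀ n : ℕ, MeasurableSpace.comap (prodTuple X n)
      (inferInstance : MeasurableSpace (Fin n → ℤ)) ≤ ‹MeasurableSpace Ω› :=
    fun n => measurable_iff_comap_le.mp (prodTuple_measurable hpm hmeas hindep hdist n)
  have hle' : MeasurableSpace.comap (X 0) inferInstance ≤ ‹MeasurableSpace Ω› :=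
    measurable_iff_comap_le.mp (hmeas 0)
  have hsup : Indep
      (⨆ n : ℕ, MeasurableSpace.comap (prodTuple X n) inferInstance)
      (MeasurableSpace.comap (X 0) inferInstance) P :=
    indep_iSup_of_monotone hL6 hle hle' hmono
  -- each CV j is measurable w.r.t. the product tuple σ-algebra
  have hCVle : ∀ j : ℕ, MeasurableSpace.comap (fun ω => CV (S ω) j) inferInstance
      ≤ MeasurableSpace.comap (prodTuple X (j + 1)) inferInstance := by
    intro j
    have hfun : (fun ω => CV (S ω) j)
        = (fun z : Fin (j + 1) → ℤ =>
            recCV (fun k => if h : 0 < k ∧ k - 1 < j + 1 then z ⟨k - 1, h.2⟩ else 0) j)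
          ∘ prodTuple X (j + 1) := by
      funext ω
      simp only [Function.comp]
      rw [CV_eq_recCV (S ω) (h0 ω) (fun i => hpm' ω i) j]
      refine recCV_congr fun k hk1 hkj => ?_
      rw [dif_pos ⟨by omega, by omega⟩]
      simp only [prodTuple, hXdef]
      have hk : k - 1 + 1 = k := by omega
      rw [hk, h0 ω]
      ring
    rw [hfun]
    exact comap_comp_le _ _ (measurable_of_countable _)
  have hS1 : (fun ω => S ω 1) = X 0 := by
    funext ω
    rw [hXdef]
    simp [h0 ω]
  rw [hS1]
  refine Indep.symm (indep_of_indep_of_le_left hsup ?_)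
  exact iSup_le fun j => le_trans (hCVle j) (le_iSup (fun n : ℕ =>
    MeasurableSpace.comap (prodTuple X n) inferInstance) (j + 1))

end
end

section
/- For a simple random walk S and every n ≥ 0, σ(S) = σ(T^n(S)) ∨ σ(S_k, k ≤ n), where T^n denotes the n-fold iterate of the Csáki–Vincze transform. -/
open MeasureTheory ProbabilityTheory Filter

noncomputable section

def Walk (S : ℕ → ℤ) : Prop :=
  S 0 = 0 ∧ ∀ i, S (i + 1) - S i = 1 ∨ S (i + 1) - S i = -1

lemma cvEll_congr_s7 {f g : ℕ → ℤ} {j : ℕ} (h : ∀ i ≤ j, f i = g i) :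
    cvEll f j = cvEll g j := by
  unfold cvEll
  congr 1
  apply Finset.filter_congr
  intro i hi
  simp only [Finset.mem_range] at hi
  rw [h (i - 1) (by omega), h (i + 1) (by omega)]

lemma CV_congr {f g : ℕ → ℤ} {k : ℕ} (h : ∀ i ≤ k + 1, f i = g i) : CV f k = CV g k := by
  unfold CV
  refine Finset.sum_congr rfl fun j hj => ?_
  simp only [Finset.mem_range] at hj
  unfold cvBarX inc
  rw [cvEll_congr_s7 (fun i hi => h i (by omega)), h (j + 1 + 1) (by omega),
    h (j + 1 + 1 - 1) (by omega), h 1 (by omega), h (1 - 1) (by omega)]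

lemma CViter_congr : ∀ (n : ℕ) {f g : ℕ → ℤ} (k : ℕ),
    (∀ i ≤ k + n, f i = g i) → CViter n f k = CViter n g k := by
  intro n
  induction n with
  | zero => intro f g k h; exact h k (by omega)
  | succ n ih =>
    intro f g k h
    show CV (CViter n f) k = CV (CViter n g) k
    exact CV_congr fun i hi => ih i fun m hm => h m (by omega)

lemma walk_CV {S : ℕ → ℤ} (h : Walk S) : Walk (CV S) := by
  refine ⟨by simp [CV], fun i => ?_⟩
  have hstep : CV S (i + 1) - CV S i = cvBarX S (i + 1) := by
    simp [CV, Finset.sum_range_succ]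
  rw [hstep]
  unfold cvBarX inc
  simp only [Nat.add_sub_cancel, Nat.sub_self]
  have ha : (-1 : ℤ) ^ cvEll S (i + 1) = 1 ∨ (-1 : ℤ) ^ cvEll S (i + 1) = -1 :=
    neg_one_pow_eq_or _ _
  have h1 : S 1 - S 0 = 1 ∨ S 1 - S 0 = -1 := h.2 0
  have h2 : S (i + 1 + 1) - S (i + 1) = 1 ∨ S (i + 1 + 1) - S (i + 1) = -1 := h.2 (i + 1)
  rcases ha with ha | ha <;> rcases h1 with h1 | h1 <;> rcases h2 with h2 | h2 <;>
    rw [ha, h1, h2] <;> norm_num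

lemma walk_CViter {S : ℕ → ℤ} (h : Walk S) : ∀ n, Walk (CViter n S) := by
  intro n
  induction n with
  | zero => exact h
  | succ n ih => exact walk_CV ih

def recon (s1 : ℤ) (W : ℕ → ℤ) : ℕ → ℤ
  | 0 => 0
  | 1 => s1
  | j + 2 =>
      recon s1 W (j + 1) +
        (-1) ^ cvEll (fun i => if h : i ≤ j + 1 then recon s1 W i else 0) (j + 1) * s1 *
          (W (j + 1) - W j)
termination_by k => k
decreasing_by all_goals omega

lemma recon_CV {S : ℕ → ℤ} (h : Walk S) : ∀ k, recon (S 1) (CV S) k = S k := by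
  intro k
  induction k using Nat.strong_induction_on with
  | _ k ih =>
    match k with
    | 0 => rw [recon, h.1]
    | 1 => rw [recon]
    | j + 2 =>
      rw [recon]
      have hIH1 : recon (S 1) (CV S) (j + 1) = S (j + 1) := ih (j + 1) (by omega)
      have he : cvEll (fun i => if h : i ≤ j + 1 then recon (S 1) (CV S) i else 0) (j + 1)
          = cvEll S (j + 1) := by
        apply cvEll_congr_s7
        intro i hi
        simp only [hi, dif_pos]
        exact ih i (by omega)
      have hW : CV S (j + 1) - CV S j = cvBarX S (j + 1) := by
        simp [CV, Finset.sum_range_succ]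
      rw [he, hIH1, hW]
      unfold cvBarX inc
      simp only [Nat.add_sub_cancel, Nat.sub_self]
      rw [h.1]
      have hv : S 1 = 1 ∨ S 1 = -1 := by
        have := h.2 0
        rw [h.1] at this
        simpa using this
      have hs1 : S 1 * S 1 = 1 := by rcases hv with hv | hv <;> rw [hv] <;> norm_num
      have hpow : (-1 : ℤ) ^ cvEll S (j + 1) * (-1 : ℤ) ^ cvEll S (j + 1) = 1 := by
        rw [← pow_add]
        exact Even.neg_one_pow ⟨_, rfl⟩
      linear_combination (S 1 * S 1 * (S (j + 1 + 1) - S (j + 1))) * hpow +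
        (S (j + 1 + 1) - S (j + 1)) * hs1

lemma recon_congr {s1 : ℤ} {W W' : ℕ → ℤ} :
    ∀ k, (∀ i < k, W i = W' i) → recon s1 W k = recon s1 W' k := by
  intro k
  induction k using Nat.strong_induction_on with
  | _ k ih =>
    match k with
    | 0 => intro _; rw [recon, recon]
    | 1 => intro _; rw [recon, recon]
    | j + 2 =>
      intro h
      rw [recon, recon]
      have h1 : recon s1 W (j + 1) = recon s1 W' (j + 1) :=
        ih (j + 1) (by omega) fun i hi => h i (by omega)
      have h2 : (fun i => if h' : i ≤ j + 1 then recon s1 W i else 0)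
          = fun i => if h' : i ≤ j + 1 then recon s1 W' i else 0 := by
        funext i
        by_cases hi : i ≤ j + 1
        · simp only [hi, dif_pos]
          exact ih i (by omega) fun m hm => h m (by omega)
        · simp [hi]
      rw [h1, h2, h (j + 1) (by omega), h j (by omega)]

def reconIter : ℕ → (ℕ → ℤ) → (ℕ → ℤ) → ℕ → ℤ
  | 0, _, W => W
  | n + 1, vals, W => recon (vals 0) (reconIter n (fun j => vals (j + 1)) W)

lemma reconIter_congr : ∀ (n : ℕ) {vals vals' W W' : ℕ → ℤ} (k : ℕ),
    (∀ j < n, vals j = vals' j) → (∀ i ≤ k, W i = W' i) →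
    reconIter n vals W k = reconIter n vals' W' k := by
  intro n
  induction n with
  | zero => intro vals vals' W W' k _ hW; exact hW k le_rfl
  | succ n ih =>
    intro vals vals' W W' k hv hW
    show recon (vals 0) (reconIter n (fun j => vals (j + 1)) W) k
      = recon (vals' 0) (reconIter n (fun j => vals' (j + 1)) W') k
    rw [hv 0 (by omega)]
    apply recon_congr
    intro i hi
    exact ih i (fun j hj => hv (j + 1) (by omega)) fun m hm => hW m (by omega)

lemma CViter_succ : ∀ (n : ℕ) (S : ℕ → ℤ), CViter (n + 1) S = CViter n (CV S) := by
  intro n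
  induction n with
  | zero => intro S; rfl
  | succ n ih =>
    intro S
    show CV (CViter (n + 1) S) = CV (CViter n (CV S))
    rw [ih]

lemma reconIter_CViter : ∀ (n : ℕ) (S : ℕ → ℤ), Walk S →
    ∀ k, reconIter n (fun j => CViter j S 1) (CViter n S) k = S k := by
  intro n
  induction n with
  | zero => intro S _ k; rfl
  | succ n ih =>
    intro S hw k
    show recon (S 1) (reconIter n (fun j => CViter (j + 1) S 1) (CViter (n + 1) S)) k = S k
    have h2 : reconIter n (fun j => CViter (j + 1) S 1) (CViter (n + 1) S) = CV S := by
      funext i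
      have h1 : (fun j => CViter (j + 1) S 1) = fun j => CViter j (CV S) 1 :=
        funext fun j => by rw [CViter_succ]
      rw [h1, CViter_succ]
      exact ih (CV S) (walk_CV hw) i
    rw [h2]
    exact recon_CV hw k



lemma meas_helper1 {Ω : Type*} {m : MeasurableSpace Ω} {N : ℕ} (g : (Fin N → ℤ) → ℤ)
    {u : Ω → Fin N → ℤ} (hu : ∀ i, Measurable[m] fun ω => u ω i) :
    Measurable[m] fun ω => g (u ω) := by
  letI := m
  exact (measurable_of_countable g).comp (measurable_pi_lambda _ hu)

lemma meas_helper2 {Ω : Type*} {m : MeasurableSpace Ω} {N M : ℕ}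
    (g : (Fin N → ℤ) × (Fin M → ℤ) → ℤ) {u : Ω → Fin N → ℤ} {v : Ω → Fin M → ℤ}
    (hu : ∀ i, Measurable[m] fun ω => u ω i) (hv : ∀ i, Measurable[m] fun ω => v ω i) :
    Measurable[m] fun ω => g (u ω, v ω) := by
  letI := m
  exact (measurable_of_countable g).comp
    ((measurable_pi_lambda _ hu).prodMk (measurable_pi_lambda _ hv))

/-- `σ(S) = σ(T^n(S)) ∨ σ(S_k, k ≤ n)`. -/
theorem sigma_eq_cviter_sup {Ω : Type*} [MeasurableSpace Ω] (P : Measure Ω)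
    [IsProbabilityMeasure P] (S : Ω → ℕ → ℤ) (hS : IsSRW P S) (n : ℕ) :
    (⨆ k : ℕ, MeasurableSpace.comap (fun ω => S ω k) inferInstance) =
      (⨆ k : ℕ, MeasurableSpace.comap (fun ω => CViter n (S ω) k) inferInstance) ⊔
        ⨆ k ∈ Set.Iic n, MeasurableSpace.comap (fun ω => S ω k) inferInstance := by
  classical
  obtain ⟨h0, hinc, -, -, -, -⟩ := hS
  have hwalk : ∀ ω, Walk (S ω) := fun ω => ⟨h0 ω, hinc ω⟩
  apply le_antisymm
  · refine iSup_le fun k => ?_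
    refine measurable_iff_comap_le.mp ?_
    have hBm : ∀ i : ℕ, Measurable[
        (⨆ k : ℕ, MeasurableSpace.comap (fun ω => CViter n (S ω) k) inferInstance) ⊔
          ⨆ k ∈ Set.Iic n, MeasurableSpace.comap (fun ω => S ω k) inferInstance]
        fun ω => CViter n (S ω) i := fun i =>
      measurable_iff_comap_le.mpr
        ((le_iSup (fun k => MeasurableSpace.comap (fun ω => CViter n (S ω) k)
          inferInstance) i).trans le_sup_left)
    have hCm : ∀ i : ℕ, i ≤ n → Measurable[
        (⨆ k : ℕ, MeasurableSpace.comap (fun ω => CViter n (S ω) k) inferInstance) ⊔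
          ⨆ k ∈ Set.Iic n, MeasurableSpace.comap (fun ω => S ω k) inferInstance]
        fun ω => S ω i := fun i hi =>
      measurable_iff_comap_le.mpr
        ((le_iSup₂ (f := fun k (_ : k ∈ Set.Iic n) =>
          MeasurableSpace.comap (fun ω => S ω k) inferInstance) i hi).trans le_sup_right)
    have hu : ∀ j : Fin n, Measurable[
        (⨆ k : ℕ, MeasurableSpace.comap (fun ω => CViter n (S ω) k) inferInstance) ⊔
          ⨆ k ∈ Set.Iic n, MeasurableSpace.comap (fun ω => S ω k) inferInstance]
        fun ω => CViter (j : ℕ) (S ω) 1 := by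
      intro j
      have heqj : (fun ω => CViter (j : ℕ) (S ω) 1)
          = fun ω => (fun v : Fin (n + 1) → ℤ =>
              CViter (j : ℕ) (fun i => if h : i < n + 1 then v ⟨i, h⟩ else 0) 1)
              (fun i : Fin (n + 1) => S ω (i : ℕ)) := by
        funext ω
        refine CViter_congr _ _ fun i hi => ?_
        have hj := j.isLt
        simp [show i < n + 1 by omega]
      rw [heqj]
      exact meas_helper1
        (fun v : Fin (n + 1) → ℤ =>
          CViter (j : ℕ) (fun i => if h : i < n + 1 then v ⟨i, h⟩ else 0) 1)
        fun i => hCm (i : ℕ) (Nat.lt_succ_iff.mp i.isLt)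
    have heq : (fun ω => S ω k)
        = fun ω => (fun p : (Fin n → ℤ) × (Fin (k + 1) → ℤ) =>
            reconIter n (fun j => if h : j < n then p.1 ⟨j, h⟩ else 0)
              (fun i => if h : i < k + 1 then p.2 ⟨i, h⟩ else 0) k)
            ((fun j : Fin n => CViter (j : ℕ) (S ω) 1),
              (fun i : Fin (k + 1) => CViter n (S ω) (i : ℕ))) := by
      funext ω
      show S ω k = reconIter n _ _ k
      calc S ω k = reconIter n (fun j => CViter j (S ω) 1) (CViter n (S ω)) k :=
            (reconIter_CViter n (S ω) (hwalk ω) k).symm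
        _ = _ := by
            refine reconIter_congr n k (fun j hj => ?_) (fun i hi => ?_)
            · simp [hj]
            · simp [show i < k + 1 by omega]
    rw [heq]
    exact meas_helper2
      (fun p : (Fin n → ℤ) × (Fin (k + 1) → ℤ) =>
        reconIter n (fun j => if h : j < n then p.1 ⟨j, h⟩ else 0)
          (fun i => if h : i < k + 1 then p.2 ⟨i, h⟩ else 0) k)
      hu fun i => hBm (i : ℕ)
  · apply sup_le
    · refine iSup_le fun k => measurable_iff_comap_le.mp ?_
      have hSA : ∀ i : ℕ, Measurable[
          ⨆ k : ℕ, MeasurableSpace.comap (fun ω => S ω k) inferInstance]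
          fun ω => S ω i := fun i =>
        measurable_iff_comap_le.mpr
          (le_iSup (fun k => MeasurableSpace.comap (fun ω => S ω k) inferInstance) i)
      have heq : (fun ω => CViter n (S ω) k)
          = fun ω => (fun v : Fin (k + n + 1) → ℤ =>
              CViter n (fun i => if h : i < k + n + 1 then v ⟨i, h⟩ else 0) k)
              (fun i : Fin (k + n + 1) => S ω (i : ℕ)) := by
        funext ω
        refine CViter_congr n k fun i hi => ?_
        simp [show i < k + n + 1 by omega]
      rw [heq]
      exact meas_helper1
        (fun v : Fin (k + n + 1) → ℤ =>
          CViter n (fun i => if h : i < k + n + 1 then v ⟨i, h⟩ else 0) k)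
        fun i => hSA (i : ℕ)
    · exact iSup₂_le fun k _ =>
        le_iSup (fun k => MeasurableSpace.comap (fun ω => S ω k) inferInstance) k

end
end

section
/- For a simple random walk S and every n ≥ 0, the σ-fields σ(T^n(S)) and σ(S_k, k ≤ n) are independent. In particular, the random variables S_1, T(S)_1, T^2(S)_1, …, T^{n-1}(S)_1, together with the process T^n(S), are mutually independent. -/
open MeasureTheory ProbabilityTheory Filter

noncomputable section

set_option maxHeartbeats 1000000

namespace CVaux

def pm (a : ℤ) : Prop := a = 1 ∨ a = -1

lemma pm_mul {a b : ℤ} (ha : pm a) (hb : pm b) : pm (a * b) := by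
  rcases ha with h | h <;> rcases hb with h' | h' <;> simp [pm, h, h']

lemma pm_neg_one_pow (l : ℕ) : pm ((-1 : ℤ) ^ l) := neg_one_pow_eq_or ℤ l

lemma pm_sq {a : ℤ} (ha : pm a) : a * a = 1 := by rcases ha with h | h <;> simp [h]

/-- A path of the walk. -/
def Path (S : ℕ → ℤ) : Prop := S 0 = 0 ∧ ∀ i, pm (S (i + 1) - S i)

def walk (x : ℕ → ℤ) (n : ℕ) : ℤ := ∑ i ∈ Finset.range n, x i

lemma walk_inc {S : ℕ → ℤ} (hS0 : S 0 = 0) (n : ℕ) :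
    walk (fun i => S (i + 1) - S i) n = S n := by
  rw [walk, Finset.sum_range_sub, hS0, sub_zero]

lemma cvEll_congr {S S' : ℕ → ℤ} {j : ℕ} (h : ∀ i ≤ j, S i = S' i) :
    cvEll S j = cvEll S' j := by
  unfold cvEll
  congr 1
  apply Finset.filter_congr
  intro i hi
  rw [Finset.mem_range] at hi
  rw [h (i - 1) (le_trans (Nat.sub_le i 1) hi.le), h (i + 1) (Nat.succ_le_of_lt hi)]

lemma cvBarX_congr {S S' : ℕ → ℤ} {j : ℕ} (h : ∀ i ≤ j + 1, S i = S' i) :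
    cvBarX S j = cvBarX S' j := by
  have h1 : cvEll S j = cvEll S' j := cvEll_congr fun i hi => h i (hi.trans (Nat.le_succ j))
  have h2 : inc S 1 = inc S' 1 := by
    unfold inc; rw [h 1 (by omega), h 0 (by omega)]
  have h3 : inc S (j + 1) = inc S' (j + 1) := by
    unfold inc; rw [Nat.add_sub_cancel, h (j + 1) le_rfl, h j (by omega)]
  unfold cvBarX; rw [h1, h2, h3]

lemma CV_congr {S S' : ℕ → ℤ} {k : ℕ} (h : ∀ i ≤ k + 1, S i = S' i) :
    CV S k = CV S' k := by
  unfold CV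
  refine Finset.sum_congr rfl fun j hj => ?_
  rw [Finset.mem_range] at hj
  exact cvBarX_congr fun i hi => h i (by omega)

lemma CViter_congr (n : ℕ) {S S' : ℕ → ℤ} {k : ℕ} (h : ∀ i ≤ k + n, S i = S' i) :
    CViter n S k = CViter n S' k := by
  induction n generalizing k with
  | zero => exact h k (by omega)
  | succ n ih =>
    show CV (CViter n S) k = CV (CViter n S') k
    exact CV_congr fun i hi => ih fun i' hi' => h i' (by omega)

lemma CViter_CV (n : ℕ) (S : ℕ → ℤ) : CViter n (CV S) = CViter (n + 1) S := by
  induction n with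
  | zero => rfl
  | succ n ih => show CV (CViter n (CV S)) = CV (CViter (n + 1) S); rw [ih]

lemma CV_succ_sub (S : ℕ → ℤ) (j : ℕ) : CV S (j + 1) - CV S j = cvBarX S (j + 1) := by
  simp [CV, Finset.sum_range_succ]

lemma Path.pm_one {S : ℕ → ℤ} (hS : Path S) : pm (S 1) := by
  have := hS.2 0; rwa [hS.1, sub_zero] at this

lemma inc_one {S : ℕ → ℤ} (hS : Path S) : inc S 1 = S 1 := by
  unfold inc; norm_num [hS.1]

lemma inc_succ (S : ℕ → ℤ) (j : ℕ) : inc S (j + 1) = S (j + 1) - S j := by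
  unfold inc; norm_num

lemma bar_pm {S : ℕ → ℤ} (hS : Path S) (j : ℕ) : pm (cvBarX S (j + 1)) := by
  unfold cvBarX
  rw [inc_one hS, inc_succ]
  exact pm_mul (pm_mul (pm_neg_one_pow _) hS.pm_one) (hS.2 _)

lemma Path.CV {S : ℕ → ℤ} (hS : Path S) : Path (CV S) := by
  constructor
  · simp [_root_.CV]
  · intro i; rw [CV_succ_sub]; exact bar_pm hS i

lemma Path.CViter {S : ℕ → ℤ} (hS : Path S) (n : ℕ) : Path (CViter n S) := by
  induction n with
  | zero => exact hS
  | succ n ih => exact ih.CV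

/-- The inverse reconstruction of the increments of `S` from `S 1` and the
increments of `CV S`. -/
def invX (δ : ℤ) (y : ℕ → ℤ) : ℕ → ℤ
  | 0 => δ
  | j + 1 =>
    (-1) ^ cvEll (walk fun i => if h : i ≤ j then invX δ y i else 0) (j + 1) * δ * y j
decreasing_by exact Nat.lt_succ_of_le h

lemma invX_congr {δ : ℤ} {y y' : ℕ → ℤ} :
    ∀ i, (∀ j < i, y j = y' j) → invX δ y i = invX δ y' i := by
  intro i
  induction i using Nat.strong_induction_on with
  | _ i ih =>
    match i with
    | 0 => intro _; rw [invX, invX]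
    | j + 1 =>
      intro h
      rw [invX, invX]
      have : (fun i => if h : i ≤ j then invX δ y i else 0)
          = fun i => if h : i ≤ j then invX δ y' i else 0 := by
        funext i
        by_cases hi : i ≤ j
        · simp only [hi, dif_pos]
          exact ih i (by omega) fun j' hj' => h j' (by omega)
        · simp [hi]
      rw [this, h j (by omega)]

lemma pm_invX {δ : ℤ} {y : ℕ → ℤ} (hδ : pm δ) :
    ∀ i, (∀ j < i, pm (y j)) → pm (invX δ y i) := by
  intro i hy
  match i with
  | 0 => rw [invX]; exact hδ
  | j + 1 =>
    rw [invX]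
    exact pm_mul (pm_mul (pm_neg_one_pow _) hδ) (hy j (by omega))

lemma invX_spec {S : ℕ → ℤ} (hS : Path S) :
    ∀ i, invX (S 1) (fun j => cvBarX S (j + 1)) i = S (i + 1) - S i := by
  intro i
  induction i using Nat.strong_induction_on with
  | _ i ih =>
    match i with
    | 0 => rw [invX, hS.1, sub_zero]
    | j + 1 =>
      rw [invX]
      have hwalk : ∀ m ≤ j + 1,
          walk (fun i => if h : i ≤ j then invX (S 1) (fun j => cvBarX S (j + 1)) i else 0) m
            = S m := by
        intro m hm
        have : ∀ i ∈ Finset.range m,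
            (if h : i ≤ j then invX (S 1) (fun j => cvBarX S (j + 1)) i else 0)
              = S (i + 1) - S i := by
          intro i hi
          rw [Finset.mem_range] at hi
          rw [dif_pos (by omega)]
          exact ih i (by omega)
        rw [walk, Finset.sum_congr rfl this, Finset.sum_range_sub, hS.1, sub_zero]
      rw [cvEll_congr fun i hi => hwalk i hi]
      show (-1) ^ cvEll S (j + 1) * S 1 * cvBarX S (j + 1) = S (j + 1 + 1) - S (j + 1)
      rw [cvBarX, inc_one hS, inc_succ]
      have h1 : ((-1 : ℤ) ^ cvEll S (j + 1)) * ((-1 : ℤ) ^ cvEll S (j + 1)) = 1 :=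
        pm_sq (pm_neg_one_pow _)
      have h2 : S 1 * S 1 = 1 := pm_sq hS.pm_one
      calc (-1) ^ cvEll S (j + 1) * S 1 * ((-1) ^ cvEll S (j + 1) * S 1 * (S (j + 1 + 1) - S (j + 1)))
          = ((-1) ^ cvEll S (j + 1) * (-1) ^ cvEll S (j + 1)) * (S 1 * S 1)
            * (S (j + 1 + 1) - S (j + 1)) := by ring
        _ = S (j + 1 + 1) - S (j + 1) := by rw [h1, h2]; ring

lemma event_iff {S : ℕ → ℤ} (hS : Path S) (δ : ℤ) (z : ℕ → ℤ) (m : ℕ) :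
    (S 1 = δ ∧ ∀ j < m, cvBarX S (j + 1) = z j) ↔
      (∀ i ≤ m, S (i + 1) - S i = invX δ z i) := by
  constructor
  · rintro ⟨h1, h2⟩ i hi
    rw [← invX_spec hS i, h1]
    exact invX_congr i fun j hj => h2 j (by omega)
  · intro h
    have h0 : S 1 = δ := by
      have := h 0 (by omega)
      rw [hS.1, sub_zero, invX] at this
      exact this
    refine ⟨h0, fun j hj => ?_⟩
    have hwalk : ∀ m' ≤ j + 1,
        walk (fun i => if h : i ≤ j then invX δ z i else 0) m' = S m' := by
      intro m' hm'
      have : ∀ i ∈ Finset.range m',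
          (if h2 : i ≤ j then invX δ z i else 0) = S (i + 1) - S i := by
        intro i hi
        rw [Finset.mem_range] at hi
        rw [dif_pos (by omega)]
        exact (h i (by omega)).symm
      rw [walk, Finset.sum_congr rfl this, Finset.sum_range_sub, hS.1, sub_zero]
    have hinc : S (j + 1 + 1) - S (j + 1) = invX δ z (j + 1) := h (j + 1) (by omega)
    rw [invX] at hinc
    rw [cvEll_congr fun i hi => hwalk i hi] at hinc
    rw [cvBarX, inc_one hS, inc_succ, h0, hinc]
    have h1 : ((-1 : ℤ) ^ cvEll S (j + 1)) * ((-1 : ℤ) ^ cvEll S (j + 1)) = 1 :=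
      pm_sq (pm_neg_one_pow _)
    have h2 : δ * δ = 1 := pm_sq (h0 ▸ hS.pm_one)
    calc (-1) ^ cvEll S (j + 1) * δ * ((-1) ^ cvEll S (j + 1) * δ * z j)
        = ((-1) ^ cvEll S (j + 1) * (-1) ^ cvEll S (j + 1)) * (δ * δ) * z j := by ring
      _ = z j := by rw [h1, h2]; ring

end CVaux


namespace CVaux

open MeasurableSpace

variable {Ω : Type*} [MeasurableSpace Ω] {P : Measure Ω} [IsProbabilityMeasure P]
variable {S : Ω → ℕ → ℤ}

def c (z : ℤ) : ENNReal := if z = 1 ∨ z = -1 then 1 / 2 else 0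

lemma c_pm {z : ℤ} (h : pm z) : c z = 1 / 2 := if_pos h

lemma srw_path (hS : IsSRW P S) (ω : Ω) : Path (S ω) :=
  ⟨hS.1 ω, fun i => hS.2.1 ω i⟩

lemma c_not_pm {z : ℤ} (h : ¬ pm z) : c z = 0 := if_neg h

/-- If `f` is a function of finitely many coordinates `Y i`, then `comap f` is
bounded by anything bounding the `comap (Y i)`. -/
lemma comap_le_of_fn {M : ℕ} (Y : Fin M → Ω → ℤ) (m' : MeasurableSpace Ω)
    (hY : ∀ i, MeasurableSpace.comap (Y i) inferInstance ≤ m')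
    (F : (Fin M → ℤ) → ℤ) (f : Ω → ℤ) (hf : ∀ ω, f ω = F fun i => Y i ω) :
    MeasurableSpace.comap f inferInstance ≤ m' := by
  have hπ : Measurable[m'] fun ω (i : Fin M) => Y i ω :=
    measurable_pi_lambda _ fun i => Measurable.of_comap_le (hY i)
  have hF : Measurable F := measurable_of_countable F
  have hfe : f = F ∘ fun ω i => Y i ω := funext hf
  rw [hfe]
  exact (hF.comp hπ).comap_le

lemma measurable_of_fn {M : ℕ} (Y : Fin M → Ω → ℤ) (hY : ∀ i, Measurable (Y i))
    (F : (Fin M → ℤ) → ℤ) (f : Ω → ℤ) (hf : ∀ ω, f ω = F fun i => Y i ω) :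
    Measurable f :=
  Measurable.of_comap_le (comap_le_of_fn Y _ (fun i => (hY i).comap_le) F f hf)

lemma comap_CViter_le (m' : MeasurableSpace Ω)
    (hY : ∀ i, MeasurableSpace.comap (fun ω => S ω i) inferInstance ≤ m') (n k : ℕ) :
    MeasurableSpace.comap (fun ω => CViter n (S ω) k) inferInstance ≤ m' := by
  refine comap_le_of_fn (M := k + n + 1) (fun i ω => S ω (i : ℕ)) m' (fun i => hY i)
    (fun v => CViter n (fun i => if h : i ≤ k + n then v ⟨i, by omega⟩ else 0) k) _ fun ω => ?_
  exact CViter_congr n fun i hi => by rw [dif_pos hi]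

lemma measurable_CViter (hSm : ∀ i, Measurable fun ω => S ω i) (n k : ℕ) :
    Measurable fun ω => CViter n (S ω) k :=
  Measurable.of_comap_le (comap_CViter_le _ (fun i => (hSm i).comap_le) n k)

lemma meas_inc_cylinder (hS : IsSRW P S) (m : ℕ) (x : ℕ → ℤ) :
    P (⋂ i ∈ Finset.range m, {ω | S ω (i + 1) - S ω i = x i})
      = ∏ i ∈ Finset.range m, P {ω | S ω (i + 1) - S ω i = x i} :=
  hS.2.2.2.1.meas_biInter fun i _ => ⟨{x i}, measurableSet_singleton _, rfl⟩

lemma meas_inc_single (hS : IsSRW P S) (i : ℕ) (x : ℤ) :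
    P {ω | S ω (i + 1) - S ω i = x} = c x := by
  by_cases hx : x = 1 ∨ x = -1
  · rw [show c x = 1/2 from if_pos hx]
    rcases hx with h | h
    · rw [h]; exact hS.2.2.2.2.1 i
    · rw [h]; exact hS.2.2.2.2.2 i
  · rw [show c x = 0 from if_neg hx]
    have : {ω | S ω (i + 1) - S ω i = x} = ∅ := by
      ext ω
      simp only [Set.mem_setOf_eq, Set.mem_empty_iff_false, iff_false]
      intro hh
      rcases hS.2.1 ω i with h' | h' <;> rw [hh] at h' <;> exact hx (by omega)
    rw [this, measure_empty]

lemma meas_inc_cylinder' (hS : IsSRW P S) (m : ℕ) (x : ℕ → ℤ) :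
    P (⋂ i ∈ Finset.range m, {ω | S ω (i + 1) - S ω i = x i})
      = ∏ i ∈ Finset.range m, c (x i) := by
  rw [meas_inc_cylinder hS]
  exact Finset.prod_congr rfl fun i _ => meas_inc_single hS i (x i)

/-- The partition/marginalization lemma. -/
lemma meas_cylinder_subset {f : ℕ → Ω → ℤ} (hmeas : ∀ i, Measurable (f i))
    (hpm : ∀ i ω, pm (f i ω)) {m : ℕ}
    (hfull : ∀ z : ℕ → ℤ, P (⋂ i ∈ Finset.range m, {ω | f i ω = z i})
      = ∏ i ∈ Finset.range m, c (z i))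
    (I : Finset ℕ) (hI : I ⊆ Finset.range m) (z : ℕ → ℤ) :
    P (⋂ i ∈ I, {ω | f i ω = z i}) = ∏ i ∈ I, c (z i) := by
  generalize hd : (Finset.range m \ I).card = d
  induction d generalizing I z with
  | zero =>
    have hIm : I = Finset.range m := by
      refine Finset.Subset.antisymm hI fun x hx => ?_
      by_contra hxI
      have hx2 : x ∈ Finset.range m \ I := Finset.mem_sdiff.2 ⟨hx, hxI⟩
      rw [Finset.card_eq_zero] at hd
      simp [hd] at hx2
    rw [hIm]
    exact hfull z
  | succ d ih =>
    have hne : (Finset.range m \ I).Nonempty := by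
      rw [← Finset.card_pos, hd]; omega
    obtain ⟨j, hj⟩ := hne
    rw [Finset.mem_sdiff] at hj
    have hAmeas : ∀ (w : ℕ → ℤ) (J : Finset ℕ), MeasurableSet (⋂ i ∈ J, {ω | f i ω = w i}) :=
      fun w J => Finset.measurableSet_biInter J fun i _ => (hmeas i) (measurableSet_singleton (w i))
    have hsplit : ∀ ε : ℤ, (⋂ i ∈ I, {ω | f i ω = z i}) ∩ {ω | f j ω = ε}
        = ⋂ i ∈ insert j I, {ω | f i ω = Function.update z j ε i} := by
      intro ε
      ext ω
      simp only [Set.mem_inter_iff, Set.mem_iInter, Set.mem_setOf_eq, Finset.mem_insert]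
      constructor
      · rintro ⟨hA, hε⟩ i (rfl | hi)
        · rw [Function.update_self]; exact hε
        · rw [Function.update_of_ne (by rintro rfl; exact hj.2 hi)]; exact hA i hi
      · intro h
        refine ⟨fun i hi => ?_, ?_⟩
        · have := h i (Or.inr hi)
          rwa [Function.update_of_ne (by rintro rfl; exact hj.2 hi)] at this
        · have := h j (Or.inl rfl)
          rwa [Function.update_self] at this
    have hunion : (⋂ i ∈ I, {ω | f i ω = z i})
        = ((⋂ i ∈ I, {ω | f i ω = z i}) ∩ {ω | f j ω = 1})
          ∪ ((⋂ i ∈ I, {ω | f i ω = z i}) ∩ {ω | f j ω = -1}) := by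
      rw [← Set.inter_union_distrib_left]
      have : {ω | f j ω = 1} ∪ {ω | f j ω = (-1 : ℤ)} = Set.univ := by
        ext ω; simpa [pm] using hpm j ω
      rw [this, Set.inter_univ]
    have hdisj : Disjoint ((⋂ i ∈ I, {ω | f i ω = z i}) ∩ {ω | f j ω = 1})
        ((⋂ i ∈ I, {ω | f i ω = z i}) ∩ {ω | f j ω = -1}) := by
      rw [Set.disjoint_left]
      rintro ω ⟨-, h1⟩ ⟨-, h2⟩
      simp only [Set.mem_setOf_eq] at h1 h2
      omega
    have hcard : (Finset.range m \ insert j I).card = d := by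
      rw [Finset.sdiff_insert, Finset.card_erase_of_mem (Finset.mem_sdiff.2 hj), hd]
      omega
    have hsub : insert j I ⊆ Finset.range m := Finset.insert_subset hj.1 hI
    have key : ∀ ε : ℤ, P (⋂ i ∈ insert j I, {ω | f i ω = Function.update z j ε i})
        = c ε * ∏ i ∈ I, c (z i) := by
      intro ε
      rw [ih (insert j I) hsub (Function.update z j ε) hcard]
      rw [Finset.prod_insert hj.2, Function.update_self]
      congr 1
      exact Finset.prod_congr rfl fun i hi => by
        rw [Function.update_of_ne (by rintro rfl; exact hj.2 hi)]
    have hm2 : MeasurableSet ((⋂ i ∈ I, {ω | f i ω = z i}) ∩ {ω | f j ω = (-1 : ℤ)}) :=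
      (hAmeas z I).inter ((hmeas j) (measurableSet_singleton _))
    rw [hunion, measure_union hdisj hm2, hsplit 1, hsplit (-1), key 1, key (-1), ← add_mul]
    have hone : c 1 + c (-1) = 1 := by
      rw [c_pm (Or.inl rfl), c_pm (Or.inr rfl)]
      exact ENNReal.add_halves 1
    rw [hone, one_mul]

end CVaux

namespace CVaux

variable {Ω : Type*} [MeasurableSpace Ω] {P : Measure Ω} [IsProbabilityMeasure P]
variable {S : Ω → ℕ → ℤ}

lemma top_int_eq : (inferInstance : MeasurableSpace ℤ)
    = MeasurableSpace.generateFrom {s : Set ℤ | ∃ z, s = {z}} := by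
  refine le_antisymm ?_ le_top
  intro s _
  have hs : s = ⋃ z ∈ s, {z} := by simp
  rw [hs]
  exact .biUnion (Set.to_countable s) fun z _ => .basic _ ⟨z, rfl⟩

lemma comap_eq_gen_singletons (f : Ω → ℤ) :
    MeasurableSpace.comap f inferInstance
      = MeasurableSpace.generateFrom {s | ∃ z : ℤ, s = f ⁻¹' {z}} := by
  conv_lhs => rw [top_int_eq, MeasurableSpace.comap_generateFrom]
  congr 1
  ext s
  simp only [Set.mem_image, Set.mem_setOf_eq]
  constructor
  · rintro ⟨t, ⟨z, rfl⟩, rfl⟩; exact ⟨z, rfl⟩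
  · rintro ⟨z, rfl⟩; exact ⟨{z}, ⟨z, rfl⟩, rfl⟩

lemma unif {f : ℕ → Ω → ℤ} (hmeas : ∀ i, Measurable (f i)) (hpm : ∀ i ω, pm (f i ω))
    (hfull : ∀ (m : ℕ) (z : ℕ → ℤ), P (⋂ i ∈ Finset.range m, {ω | f i ω = z i})
      = ∏ i ∈ Finset.range m, c (z i)) :
    iIndepFun f P ∧ ∀ (i : ℕ) (z : ℤ), P {ω | f i ω = z} = c z := by
  classical
  have hmarg : ∀ (i : ℕ) (z : ℤ), P {ω | f i ω = z} = c z := by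
    intro i z
    have h := meas_cylinder_subset hmeas hpm (hfull (i + 1)) {i}
      (Finset.singleton_subset_iff.2 (Finset.mem_range.2 (Nat.lt_succ_self i))) (fun _ => z)
    simpa using h
  refine ⟨?_, hmarg⟩
  rw [iIndepFun_iff_iIndep]
  refine iIndepSets.iIndep (fun i => (hmeas i).comap_le)
    (fun i => {s | ∃ z : ℤ, s = f i ⁻¹' {z}}) ?_ (fun i => comap_eq_gen_singletons (f i)) ?_
  · rintro i s ⟨z, rfl⟩ t ⟨z', rfl⟩ hne
    obtain ⟨ω, hω⟩ := hne
    simp only [Set.mem_inter_iff, Set.mem_preimage, Set.mem_singleton_iff] at hω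
    have hzz : z' = z := hω.2.symm.trans hω.1
    subst hzz
    exact ⟨z', Set.inter_self _⟩
  · rw [iIndepSets_iff]
    intro J g hg
    set z : ℕ → ℤ := fun i => if h : ∃ w : ℤ, g i = f i ⁻¹' {w} then h.choose else 0 with hzdef
    have hzi : ∀ i ∈ J, g i = {ω | f i ω = z i} := by
      intro i hi
      obtain ⟨w, hw⟩ := hg i hi
      have hex : ∃ w : ℤ, g i = f i ⁻¹' {w} := ⟨w, hw⟩
      have : z i = hex.choose := by rw [hzdef]; exact dif_pos hex
      rw [this]
      exact hex.choose_spec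
    obtain ⟨m, hm⟩ := Finset.exists_nat_subset_range J
    have h1 : ⋂ i ∈ J, g i = ⋂ i ∈ J, {ω | f i ω = z i} :=
      Set.iInter₂_congr hzi
    rw [h1, meas_cylinder_subset hmeas hpm (hfull m) J hm z]
    exact (Finset.prod_congr rfl fun i hi => by rw [hzi i hi, hmarg i (z i)]).symm

end CVaux

namespace CVaux

def gfam {α : Type*} (S : α → ℕ → ℤ) : ℕ → α → ℤ
  | 0 => fun ω => S ω 1
  | j + 1 => fun ω => cvBarX (S ω) (j + 1)

variable {Ω : Type*} [MeasurableSpace Ω] {P : Measure Ω} [IsProbabilityMeasure P]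
variable {S : Ω → ℕ → ℤ}

lemma gfam_pm (hS : IsSRW P S) : ∀ (i : ℕ) (ω : Ω), pm (gfam S i ω) := by
  intro i ω
  cases i with
  | zero => exact (srw_path hS ω).pm_one
  | succ j => exact bar_pm (srw_path hS ω) j

lemma gfam_meas (hS : IsSRW P S) : ∀ i, Measurable (gfam S i) := by
  intro i
  cases i with
  | zero => exact hS.2.2.1 1
  | succ j =>
    refine measurable_of_fn (M := j + 3) (fun i ω => S ω (i : ℕ)) (fun i => hS.2.2.1 i)
      (fun v => cvBarX (fun i => if h : i ≤ j + 2 then v ⟨i, by omega⟩ else 0) (j + 1)) _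
      fun ω => ?_
    exact cvBarX_congr fun i hi => by rw [dif_pos hi]

lemma gfam_full (hS : IsSRW P S) (m : ℕ) (z : ℕ → ℤ) :
    P (⋂ i ∈ Finset.range m, {ω | gfam S i ω = z i}) = ∏ i ∈ Finset.range m, c (z i) := by
  cases m with
  | zero => simp
  | succ m' =>
    by_cases hall : ∀ i < m' + 1, pm (z i)
    · have hev : (⋂ i ∈ Finset.range (m' + 1), {ω | gfam S i ω = z i})
          = ⋂ i ∈ Finset.range (m' + 1),
              {ω | S ω (i + 1) - S ω i = invX (z 0) (fun j => z (j + 1)) i} := by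
        ext ω
        simp only [Set.mem_iInter, Set.mem_setOf_eq, Finset.mem_range]
        constructor
        · intro h i hi
          exact (event_iff (srw_path hS ω) (z 0) (fun j => z (j + 1)) m').1
            ⟨h 0 (by omega), fun j hj => h (j + 1) (by omega)⟩ i (by omega)
        · intro h
          have h2 := (event_iff (srw_path hS ω) (z 0) (fun j => z (j + 1)) m').2
            (fun i hi => h i (by omega))
          intro i hi
          match i with
          | 0 => exact h2.1
          | j + 1 => exact h2.2 j (by omega)
      rw [hev, meas_inc_cylinder' hS]
      refine Finset.prod_congr rfl fun i hi => ?_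
      rw [Finset.mem_range] at hi
      rw [c_pm (pm_invX (hall 0 (by omega)) i fun j hj => hall (j + 1) (by omega)),
        c_pm (hall i hi)]
    · push_neg at hall
      obtain ⟨i0, hi0, hnp⟩ := hall
      have hempty : (⋂ i ∈ Finset.range (m' + 1), {ω | gfam S i ω = z i}) = ∅ := by
        refine Set.eq_empty_iff_forall_notMem.2 fun ω hω => ?_
        have hmem := Set.mem_iInter₂.1 hω i0 (Finset.mem_range.2 hi0)
        exact hnp (hmem ▸ gfam_pm hS i0 ω)
      rw [hempty, measure_empty]
      exact (Finset.prod_eq_zero (Finset.mem_range.2 hi0) (c_not_pm hnp)).symm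

lemma isSRW_CV (hS : IsSRW P S) : IsSRW P (fun ω => CV (S ω)) := by
  have hU := unif (gfam_meas hS) (gfam_pm hS) (gfam_full hS)
  have hshift : ∀ m (z : ℕ → ℤ),
      P (⋂ i ∈ Finset.range m, {ω | gfam S (i + 1) ω = z i})
        = ∏ i ∈ Finset.range m, c (z i) := by
    intro m z
    have hsub : (Finset.range m).image (· + 1) ⊆ Finset.range (m + 1) := by
      intro i hi
      simp only [Finset.mem_image, Finset.mem_range] at hi
      obtain ⟨i', hi', rfl⟩ := hi
      exact Finset.mem_range.2 (by omega)
    have himage : (⋂ i ∈ Finset.range m, {ω | gfam S (i + 1) ω = z i})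
        = ⋂ i ∈ (Finset.range m).image (· + 1), {ω | gfam S i ω = (fun i => z (i - 1)) i} := by
      ext ω
      simp only [Set.mem_iInter, Set.mem_setOf_eq, Finset.mem_image, Finset.mem_range]
      constructor
      · rintro h i ⟨i', hi', rfl⟩
        simpa using h i' hi'
      · intro h i hi
        simpa using h (i + 1) ⟨i, hi, rfl⟩
    have h2 := meas_cylinder_subset (gfam_meas hS) (gfam_pm hS) (gfam_full hS (m + 1))
      ((Finset.range m).image (· + 1)) hsub (fun i => z (i - 1))
    calc P (⋂ i ∈ Finset.range m, {ω | gfam S (i + 1) ω = z i})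
        = P (⋂ i ∈ (Finset.range m).image (· + 1),
            {ω | gfam S i ω = (fun i => z (i - 1)) i}) := by rw [himage]
      _ = ∏ i ∈ (Finset.range m).image (· + 1), c ((fun i => z (i - 1)) i) := h2
      _ = ∏ i ∈ Finset.range m, c (z i) := by
          rw [Finset.prod_image (fun a _ b _ h => by omega)]
          exact Finset.prod_congr rfl fun i _ => by simp
  refine ⟨fun ω => by simp [CV], fun ω i => ?_, fun k => ?_, ?_, fun i => ?_, fun i => ?_⟩
  · rw [CV_succ_sub]; exact bar_pm (srw_path hS ω) i
  · exact measurable_CViter (S := S) hS.2.2.1 1 k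
  · have he : (fun (i : ℕ) ω => CV (S ω) (i + 1) - CV (S ω) i) = fun i => gfam S (i + 1) := by
      funext i ω
      rw [CV_succ_sub]
      rfl
    rw [he]
    exact (unif (fun i => gfam_meas hS (i + 1)) (fun i ω => gfam_pm hS (i + 1) ω) hshift).1
  · have hset : {ω | CV (S ω) (i + 1) - CV (S ω) i = 1} = {ω | gfam S (i + 1) ω = 1} := by
      ext ω
      rw [Set.mem_setOf_eq, Set.mem_setOf_eq, CV_succ_sub]
      rfl
    rw [hset, hU.2 (i + 1) 1, c_pm (Or.inl rfl)]
  · have hset : {ω | CV (S ω) (i + 1) - CV (S ω) i = -1} = {ω | gfam S (i + 1) ω = -1} := by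
      ext ω
      rw [Set.mem_setOf_eq, Set.mem_setOf_eq, CV_succ_sub]
      rfl
    rw [hset, hU.2 (i + 1) (-1), c_pm (Or.inr rfl)]

lemma indep_S1_CV (hS : IsSRW P S) :
    Indep (MeasurableSpace.comap (fun ω => S ω 1) inferInstance)
      (⨆ k : ℕ, MeasurableSpace.comap (fun ω => CV (S ω) k) inferInstance) P := by
  have hU := unif (gfam_meas hS) (gfam_pm hS) (gfam_full hS)
  have hbi := indep_biSup_compl (fun n => (gfam_meas hS n).comap_le) hU.1.iIndep ({0} : Set ℕ)
  refine indep_of_indep_of_le_right (indep_of_indep_of_le_left hbi ?_) ?_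
  · have h0 : (fun ω => S ω 1) = gfam S 0 := rfl
    rw [h0]
    exact le_biSup (fun n => MeasurableSpace.comap (gfam S n) Int.instMeasurableSpace)
      (Set.mem_singleton 0)
  · refine iSup_le fun k => ?_
    refine comap_le_of_fn (M := k) (fun j ω => gfam S ((j : ℕ) + 1) ω) _
      (fun j => le_biSup (fun n => MeasurableSpace.comap (gfam S n) Int.instMeasurableSpace)
        (show ((j : ℕ) + 1) ∈ ({0} : Set ℕ)ᶜ by simp)) (fun v => ∑ j, v j) _ fun ω => ?_
    rw [CV, Finset.sum_range]
    rfl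

end CVaux

namespace CVaux

variable {Ω : Type*} [m0 : MeasurableSpace Ω] {P : Measure Ω} [IsProbabilityMeasure P]
variable {S : Ω → ℕ → ℤ}

lemma indep_chain {A B C L : MeasurableSpace Ω}
    (hL0 : L ≤ m0) (hA0 : A ≤ m0) (hB0 : B ≤ m0)
    (hLC : L ≤ C) (hBC : B ≤ C) (hAC : Indep A C P) (hLB : Indep L B P) :
    Indep L (A ⊔ B) P := by
  have hgenL : L = MeasurableSpace.generateFrom {s | MeasurableSet[L] s} :=
    (@MeasurableSpace.generateFrom_measurableSet Ω L).symm
  refine IndepSets.indep (p1 := {s | MeasurableSet[L] s})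
    (p2 := {s | ∃ a b, MeasurableSet[A] a ∧ MeasurableSet[B] b ∧ s = a ∩ b})
    hL0 (sup_le hA0 hB0) ?_ ?_ hgenL ?_ ?_
  · intro s hs t ht _
    exact MeasurableSet.inter hs ht
  · rintro s ⟨a, b, ha, hb, rfl⟩ t ⟨a', b', ha', hb', rfl⟩ _
    exact ⟨a ∩ a', b ∩ b', ha.inter ha', hb.inter hb',
      Set.inter_inter_inter_comm a b a' b'⟩
  · refine le_antisymm (sup_le ?_ ?_) (MeasurableSpace.generateFrom_le ?_)
    · intro s hs
      exact MeasurableSpace.measurableSet_generateFrom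
        ⟨s, Set.univ, hs, MeasurableSet.univ, (Set.inter_univ s).symm⟩
    · intro s hs
      exact MeasurableSpace.measurableSet_generateFrom
        ⟨Set.univ, s, MeasurableSet.univ, hs, (Set.univ_inter s).symm⟩
    · rintro s ⟨a, b, ha, hb, rfl⟩
      exact MeasurableSet.inter (le_sup_left (b := B) a ha) (le_sup_right (a := A) b hb)
  · rw [IndepSets_iff]
    rintro t1 t2 ht1 ⟨a, b, ha, hb, rfl⟩
    have h1 : P (a ∩ (t1 ∩ b)) = P a * P (t1 ∩ b) :=
      (Indep_iff A C P).1 hAC a (t1 ∩ b) ha (MeasurableSet.inter (hLC t1 ht1) (hBC b hb))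
    have h2 : P (t1 ∩ b) = P t1 * P b := (Indep_iff L B P).1 hLB t1 b ht1 hb
    have h3 : P (a ∩ b) = P a * P b := (Indep_iff A C P).1 hAC a b ha (hBC b hb)
    have hre : t1 ∩ (a ∩ b) = a ∩ (t1 ∩ b) := Set.inter_left_comm t1 a b
    rw [hre, h1, h2, h3]
    ring

lemma iIndep_fin_one (M : Fin 1 → MeasurableSpace Ω) : iIndep M P := by
  rw [iIndep_iff]
  intro J f _
  rcases Finset.eq_empty_or_nonempty J with rfl | ⟨j, hj⟩
  · simp
  · have hJ : J = {0} := Finset.ext fun x => by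
      constructor
      · intro _; simp [Subsingleton.elim x 0]
      · intro _; rw [Subsingleton.elim x j]; exact hj
    rw [hJ]
    simp

lemma iIndep_fin_cases {n : ℕ} {A C : MeasurableSpace Ω} {G : Fin (n + 1) → MeasurableSpace Ω}
    (hGC : ∀ i, G i ≤ C) (hAC : Indep A C P) (hG : iIndep G P) :
    iIndep (Fin.cases A G : Fin (n + 2) → MeasurableSpace Ω) P := by
  have key : ∀ (J : Finset (Fin (n + 2))), 0 ∉ J → ∀ f : Fin (n + 2) → Set Ω,
      (∀ i ∈ J, MeasurableSet[Fin.cases A G i] (f i)) →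
      ((⋂ i ∈ J, f i)
          = (⋂ i ∈ Finset.univ.filter (fun i : Fin (n + 1) => i.succ ∈ J), f i.succ)
        ∧ P (⋂ i ∈ J, f i) = ∏ i ∈ J, P (f i)) := by
    intro J h0 f hf
    have hJ : J = (Finset.univ.filter (fun i : Fin (n + 1) => i.succ ∈ J)).image Fin.succ := by
      ext j
      simp only [Finset.mem_image, Finset.mem_filter, Finset.mem_univ, true_and]
      constructor
      · intro hj
        have hjne : j ≠ 0 := fun h => h0 (h ▸ hj)
        exact ⟨j.pred hjne, by rwa [Fin.succ_pred], by rw [Fin.succ_pred]⟩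
      · rintro ⟨i, hi, rfl⟩; exact hi
    have hInter : (⋂ i ∈ J, f i)
        = ⋂ i ∈ Finset.univ.filter (fun i : Fin (n + 1) => i.succ ∈ J), f i.succ := by
      conv_lhs => rw [hJ]
      ext ω
      simp only [Set.mem_iInter, Finset.mem_image, Finset.mem_filter, Finset.mem_univ, true_and]
      constructor
      · intro h i hi
        exact h i.succ ⟨i, hi, rfl⟩
      · rintro h j ⟨i, hi, rfl⟩
        exact h i hi
    have hmeas' : ∀ i ∈ Finset.univ.filter (fun i : Fin (n + 1) => i.succ ∈ J),
        MeasurableSet[G i] (f i.succ) := by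
      intro i hi
      rw [Finset.mem_filter] at hi
      have := hf i.succ hi.2
      exact this
    refine ⟨hInter, ?_⟩
    rw [hInter, (iIndep_iff G P).1 hG _ hmeas']
    conv_rhs => rw [hJ]
    exact (Finset.prod_image (g := Fin.succ) (f := fun i => P (f i)) fun a _ b _ h => Fin.succ_inj.mp h).symm
  rw [iIndep_iff]
  intro J f hf
  by_cases h0 : 0 ∈ J
  · have h0' : (0 : Fin (n + 2)) ∉ J.erase 0 := Finset.notMem_erase 0 J
    have hf₀ : ∀ i ∈ J.erase 0, MeasurableSet[Fin.cases A G i] (f i) :=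
      fun i hi => hf i (Finset.mem_of_mem_erase hi)
    obtain ⟨hInter, hprod⟩ := key (J.erase 0) h0' f hf₀
    have hmf0 : MeasurableSet[A] (f 0) := hf 0 h0
    have hmrest : MeasurableSet[C] (⋂ i ∈ J.erase 0, f i) := by
      refine Finset.measurableSet_biInter _ fun i hi => ?_
      have hine : i ≠ 0 := Finset.ne_of_mem_erase hi
      have h1 := hf₀ i hi
      rw [← Fin.succ_pred i hine] at h1 ⊢
      change MeasurableSet[G (i.pred hine)] _ at h1
      exact hGC (i.pred hine) _ h1
    have hJins : J = insert 0 (J.erase 0) := (Finset.insert_erase h0).symm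
    conv_lhs => rw [hJins, Finset.set_biInter_insert]
    conv_rhs => rw [hJins, Finset.prod_insert (Finset.notMem_erase 0 J)]
    rw [(Indep_iff A C P).1 hAC (f 0) (⋂ i ∈ J.erase 0, f i) hmf0 hmrest, hprod]
  · exact (key J h0 f hf).2

end CVaux

/-- `σ(T^n(S))` and `σ(S_k, k ≤ n)` are independent; in particular
`S_1, T(S)_1, …, T^{n-1}(S)_1` and the process `T^n(S)` are mutually independent. -/
theorem cviter_indep_past {Ω : Type*} [MeasurableSpace Ω] (P : Measure Ω)
    [IsProbabilityMeasure P] (S : Ω → ℕ → ℤ) (hS : IsSRW P S) (n : ℕ) :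
    Indep (⨆ k : ℕ, MeasurableSpace.comap (fun ω => CViter n (S ω) k) inferInstance)
        (⨆ k ∈ Set.Iic n, MeasurableSpace.comap (fun ω => S ω k) inferInstance) P ∧
      iIndep (fun i : Fin (n + 1) =>
        if (i : ℕ) < n then
          MeasurableSpace.comap (fun ω => CViter (i : ℕ) (S ω) 1) inferInstance
        else
          ⨆ k : ℕ, MeasurableSpace.comap (fun ω => CViter n (S ω) k) inferInstance) P := by
  induction n generalizing S with
  | zero =>
    refine ⟨?_, CVaux.iIndep_fin_one _⟩
    have hR : (⨆ k ∈ Set.Iic 0, MeasurableSpace.comap (fun ω => S ω k) inferInstance)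
        = (⊥ : MeasurableSpace Ω) := by
      refine le_antisymm (iSup₂_le fun k hk => ?_) bot_le
      have hk0 : k = 0 := Nat.le_zero.1 hk
      subst hk0
      have hconst : (fun ω => S ω 0) = fun _ => (0 : ℤ) := funext fun ω => hS.1 ω
      rw [hconst, MeasurableSpace.comap_const]
    rw [hR]
    exact indep_bot_right _
  | succ n ih =>
    have hS' : IsSRW P fun ω => CV (S ω) := CVaux.isSRW_CV hS
    obtain ⟨ih1, ih2⟩ := ih (fun ω => CV (S ω)) hS'
    have hC := CVaux.indep_S1_CV hS
    have he : ∀ k : ℕ, (fun ω => CViter (n + 1) (S ω) k) = fun ω => CViter n (CV (S ω)) k :=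
      fun k => funext fun ω => (congrFun (CVaux.CViter_CV n (S ω)) k).symm
    have hL : (⨆ k : ℕ, MeasurableSpace.comap (fun ω => CViter (n + 1) (S ω) k) inferInstance)
        = ⨆ k : ℕ, MeasurableSpace.comap (fun ω => CViter n (CV (S ω)) k) inferInstance :=
      iSup_congr fun k => by rw [he k]
    have hLC : (⨆ k : ℕ, MeasurableSpace.comap (fun ω => CViter n (CV (S ω)) k) inferInstance)
        ≤ ⨆ k : ℕ, MeasurableSpace.comap (fun ω => CV (S ω) k) inferInstance :=
      iSup_le fun k => CVaux.comap_CViter_le (S := fun ω => CV (S ω)) _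
        (fun i => le_iSup
          (fun k => MeasurableSpace.comap (fun ω => CV (S ω) k) inferInstance) i) n k
    have hBC : (⨆ k ∈ Set.Iic n, MeasurableSpace.comap (fun ω => CV (S ω) k) inferInstance)
        ≤ ⨆ k : ℕ, MeasurableSpace.comap (fun ω => CV (S ω) k) inferInstance :=
      iSup₂_le fun k _ => le_iSup
        (fun k => MeasurableSpace.comap (fun ω => CV (S ω) k) inferInstance) k
    have hL0 : (⨆ k : ℕ, MeasurableSpace.comap (fun ω => CViter n (CV (S ω)) k) inferInstance)
        ≤ ‹MeasurableSpace Ω› :=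
      iSup_le fun k => Measurable.comap_le (CVaux.measurable_CViter hS'.2.2.1 n k)
    have hA0 : MeasurableSpace.comap (fun ω => S ω 1) inferInstance ≤ ‹MeasurableSpace Ω› :=
      Measurable.comap_le (hS.2.2.1 1)
    have hB0 : (⨆ k ∈ Set.Iic n, MeasurableSpace.comap (fun ω => CV (S ω) k) inferInstance)
        ≤ ‹MeasurableSpace Ω› :=
      iSup₂_le fun k _ => Measurable.comap_le (hS'.2.2.1 k)
    have hchain := CVaux.indep_chain hL0 hA0 hB0 hLC hBC hC ih1
    constructor
    · rw [hL]
      refine indep_of_indep_of_le_right hchain ?_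
      refine iSup₂_le fun k hk => ?_
      refine CVaux.comap_le_of_fn (M := k + 1)
        (fun i ω => if (i : ℕ) = 0 then S ω 1 else CV (S ω) ((i : ℕ) - 1)) _ ?_
        (fun v => CVaux.walk (CVaux.invX (v ⟨0, Nat.succ_pos k⟩)
          (fun j => if h : j + 2 ≤ k then v ⟨j + 2, by omega⟩ - v ⟨j + 1, by omega⟩ else 0)) k)
        _ fun ω => ?_
      · intro i
        beta_reduce
        by_cases hi : (i : ℕ) = 0
        · have hYe : (fun ω => if (i : ℕ) = 0 then S ω 1 else CV (S ω) ((i : ℕ) - 1))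
              = fun ω => S ω 1 := funext fun ω => if_pos hi
          rw [hYe]
          exact le_sup_left
        · have hYe : (fun ω => if (i : ℕ) = 0 then S ω 1 else CV (S ω) ((i : ℕ) - 1))
              = fun ω => CV (S ω) ((i : ℕ) - 1) := funext fun ω => if_neg hi
          rw [hYe]
          refine le_trans (le_biSup
            (fun k => MeasurableSpace.comap (fun ω => CV (S ω) k) inferInstance)
            (show ((i : ℕ) - 1) ∈ Set.Iic n by
              have hlt := i.isLt
              have hk2 : k ≤ n + 1 := hk
              simp only [Set.mem_Iic]
              omega)) le_sup_right
      · show S ω k = CVaux.walk (CVaux.invX (S ω 1)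
            (fun j => if h : j + 2 ≤ k then CV (S ω) (j + 1) - CV (S ω) j else 0)) k
        have step1 : S ω k
            = CVaux.walk (CVaux.invX (S ω 1) (fun j => cvBarX (S ω) (j + 1))) k := by
          have hc : ∀ i ∈ Finset.range k,
              CVaux.invX (S ω 1) (fun j => cvBarX (S ω) (j + 1)) i = S ω (i + 1) - S ω i :=
            fun i _ => CVaux.invX_spec (CVaux.srw_path hS ω) i
          rw [CVaux.walk, Finset.sum_congr rfl hc, Finset.sum_range_sub, hS.1 ω, sub_zero]
        rw [step1]
        unfold CVaux.walk
        refine Finset.sum_congr rfl fun i hi => ?_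
        rw [Finset.mem_range] at hi
        refine CVaux.invX_congr i fun j hj => ?_
        rw [dif_pos (by omega), CVaux.CV_succ_sub]
    · have hfam : (fun i : Fin (n + 1 + 1) =>
          if (i : ℕ) < n + 1 then
            MeasurableSpace.comap (fun ω => CViter (i : ℕ) (S ω) 1) inferInstance
          else
            ⨆ k : ℕ, MeasurableSpace.comap (fun ω => CViter (n + 1) (S ω) k) inferInstance)
          = Fin.cases (MeasurableSpace.comap (fun ω => S ω 1) inferInstance)
              (fun i : Fin (n + 1) =>
                if (i : ℕ) < n then
                  MeasurableSpace.comap (fun ω => CViter (i : ℕ) (CV (S ω)) 1) inferInstance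
                else
                  ⨆ k : ℕ, MeasurableSpace.comap
                    (fun ω => CViter n (CV (S ω)) k) inferInstance) := by
          funext i
          induction i using Fin.cases with
          | zero =>
            rw [Fin.cases_zero]
            simp only [Fin.val_zero]
            simp only [show (0:ℕ) < n + 1 from Nat.succ_pos n, ↓reduceIte]
            rfl
          | succ i =>
            rw [Fin.cases_succ, Fin.val_succ]
            by_cases hi : (i : ℕ) < n
            · rw [if_pos (by omega), if_pos hi]
              have hEq : (fun ω => CViter ((i : ℕ) + 1) (S ω) 1)
                  = fun ω => CViter (i : ℕ) (CV (S ω)) 1 :=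
                funext fun ω => (congrFun (CVaux.CViter_CV (i : ℕ) (S ω)) 1).symm
              rw [hEq]
            · rw [if_neg (by omega), if_neg hi]
              exact hL
      rw [hfam]
      refine CVaux.iIndep_fin_cases ?_ hC ih2
      intro i
      by_cases hi : (i : ℕ) < n
      · rw [if_pos hi]
        exact CVaux.comap_CViter_le (S := fun ω => CV (S ω)) _
          (fun j => le_iSup
            (fun k => MeasurableSpace.comap (fun ω => CV (S ω) k) inferInstance) j) (i : ℕ) 1
      · rw [if_neg hi]
        exact hLC

end
end
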